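/- arXiv:2504.16327 — 8 statements merged into one kernel-verified Lean document; each statement's English description precedes it below -/
import Mathlib

section
/- For any integer i ≥ 1 and real numbers α, x_0, ..., x_{i-1} ∈ [0,1], if (1/i) · Σ_{k=0}^{i-1} x_k ≥ α, then Σ_{k=0}^{i-1} ((k+1)/(i(i+1))) · x_k ≥ α²/2. -/
lemma gauss_real (n : ℕ) : ∑ j ∈ Finset.range n, (j : ℝ) = (n : ℝ) * ((n : ℝ) - 1) / 2 := by
  induction n with
  | zero => simp
  | succ m ihm => rw [Finset.sum_range_succ, ihm]; push_cast; ring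

/-- Lower bound on the sum of truncated linear pieces. -/
lemma aux_maxsum (i : ℕ) : ∀ t : ℝ, 0 ≤ t → t ≤ (i : ℝ) →
    t * (t + 1) / 2 ≤ ∑ j ∈ Finset.range i, max (t - (j : ℝ)) 0 := by
  induction i with
  | zero => intro t ht0 ht1; simp at ht1 ⊢; nlinarith
  | succ n ih =>
    intro t ht0 ht1
    rw [Finset.sum_range_succ]
    by_cases h : t ≤ (n : ℝ)
    · have h1 := ih t ht0 h
      have h2 : (0 : ℝ) ≤ max (t - (n : ℝ)) 0 := le_max_right _ _
      linarith
    · push_neg at h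
      have hsum : ∀ j ∈ Finset.range (n + 1), max (t - (j : ℝ)) 0 = t - (j : ℝ) := by
        intro j hj
        rw [Finset.mem_range] at hj
        have : (j : ℝ) ≤ (n : ℝ) := by exact_mod_cast Nat.lt_succ_iff.mp hj
        rw [max_eq_left]; linarith
      rw [show (∑ j ∈ Finset.range n, max (t - (j : ℝ)) 0) + max (t - (n : ℝ)) 0
          = ∑ j ∈ Finset.range (n + 1), max (t - (j : ℝ)) 0 from
          (Finset.sum_range_succ _ n).symm,
        Finset.sum_congr rfl hsum, Finset.sum_sub_distrib, Finset.sum_const,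
        Finset.card_range]
      have hid : ∑ j ∈ Finset.range (n + 1), (j : ℝ) = ((n:ℝ)+1) * ((n:ℝ)+1-1) / 2 := by
        rw [gauss_real]; push_cast; ring
      rw [hid, nsmul_eq_mul]
      have hn1 : t ≤ (n : ℝ) + 1 := by push_cast at ht1; linarith
      push_cast
      nlinarith [mul_nonneg (sub_pos.mpr h).le (sub_nonneg.mpr hn1)]

/-- Abel summation: `∑ (k+1) x_k = ∑_j ∑_{k ∈ [j, i)} x_k`. -/
lemma aux_abel (x : ℕ → ℝ) (i : ℕ) :
    ∑ k ∈ Finset.range i, ((k : ℝ) + 1) * x k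
      = ∑ j ∈ Finset.range i, ∑ k ∈ Finset.Ico j i, x k := by
  induction i with
  | zero => simp
  | succ n ih =>
    rw [Finset.sum_range_succ, Finset.sum_range_succ]
    have : ∀ j ∈ Finset.range n, ∑ k ∈ Finset.Ico j (n + 1), x k
        = (∑ k ∈ Finset.Ico j n, x k) + x n := by
      intro j hj
      rw [Finset.mem_range] at hj
      exact Finset.sum_Ico_succ_top hj.le _
    rw [Finset.sum_congr rfl this, Finset.sum_add_distrib, Finset.sum_const,
      Finset.card_range, ← ih]
    simp [Finset.Ico_self]
    push_cast
    ring

/-- For any integer `i ≥ 1` and reals `α, x_0, …, x_{i-1} ∈ [0,1]`,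
if `(1/i)·Σ_k x_k ≥ α` then `Σ_k ((k+1)/(i(i+1)))·x_k ≥ α²/2`. -/
theorem fractional_knapsack (i : ℕ) (hi : 1 ≤ i) (α : ℝ) (hα : α ∈ Set.Icc (0 : ℝ) 1)
    (x : ℕ → ℝ) (hx : ∀ k < i, x k ∈ Set.Icc (0 : ℝ) 1)
    (h : α ≤ ∑ k ∈ Finset.range i, (1 / (i : ℝ)) * x k) :
    α ^ 2 / 2 ≤ ∑ k ∈ Finset.range i, ((k + 1 : ℝ) / ((i : ℝ) * ((i : ℝ) + 1))) * x k := by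
  obtain ⟨hα0, hα1⟩ := hα
  have hipos : (0 : ℝ) < i := by exact_mod_cast hi
  set S := ∑ k ∈ Finset.range i, x k with hSdef
  have hSsum : ∑ k ∈ Finset.range i, (1 / (i : ℝ)) * x k = (1 / (i : ℝ)) * S := by
    rw [Finset.mul_sum]
  have hS_lb : α * i ≤ S := by
    rw [hSsum] at h
    calc α * i ≤ ((1 / (i : ℝ)) * S) * i := by nlinarith
    _ = S := by field_simp
  have hS0 : 0 ≤ S := Finset.sum_nonneg fun k hk =>
    (hx k (Finset.mem_range.mp hk)).1
  have hSi : S ≤ (i : ℝ) := by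
    calc S ≤ ∑ _k ∈ Finset.range i, (1 : ℝ) :=
          Finset.sum_le_sum fun k hk => (hx k (Finset.mem_range.mp hk)).2
    _ = i := by simp
  have hT : ∀ j ∈ Finset.range i, max (S - (j : ℝ)) 0 ≤ ∑ k ∈ Finset.Ico j i, x k := by
    intro j hj
    rw [Finset.mem_range] at hj
    have hT0 : 0 ≤ ∑ k ∈ Finset.Ico j i, x k :=
      Finset.sum_nonneg fun k hk => (hx k (Finset.mem_Ico.mp hk).2).1
    have hsplit : (∑ k ∈ Finset.range j, x k) + ∑ k ∈ Finset.Ico j i, x k = S := by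
      rw [hSdef, Finset.range_eq_Ico, Finset.range_eq_Ico]
      exact Finset.sum_Ico_consecutive x (Nat.zero_le j) hj.le
    have hhead : ∑ k ∈ Finset.range j, x k ≤ (j : ℝ) := by
      calc ∑ k ∈ Finset.range j, x k ≤ ∑ _k ∈ Finset.range j, (1 : ℝ) :=
            Finset.sum_le_sum fun k hk =>
              (hx k (lt_of_lt_of_le (Finset.mem_range.mp hk) hj.le)).2
      _ = j := by simp
    exact max_le (by linarith) hT0
  have key : S * (S + 1) / 2 ≤ ∑ k ∈ Finset.range i, ((k : ℝ) + 1) * x k := by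
    rw [aux_abel]
    calc S * (S + 1) / 2 ≤ ∑ j ∈ Finset.range i, max (S - (j : ℝ)) 0 :=
          aux_maxsum i S hS0 hSi
    _ ≤ _ := Finset.sum_le_sum hT
  have hrw : ∑ k ∈ Finset.range i, ((k + 1 : ℝ) / ((i : ℝ) * ((i : ℝ) + 1))) * x k
      = (1 / ((i : ℝ) * ((i : ℝ) + 1))) * ∑ k ∈ Finset.range i, ((k : ℝ) + 1) * x k := by
    rw [Finset.mul_sum]
    apply Finset.sum_congr rfl
    intro k _
    ring
  rw [hrw]
  have hii : (0 : ℝ) < (i : ℝ) * ((i : ℝ) + 1) := by positivity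
  have hmain : α ^ 2 * ((i : ℝ) * ((i : ℝ) + 1)) ≤ S * (S + 1) := by
    nlinarith [mul_nonneg (sub_nonneg.mpr hS_lb) (by nlinarith [mul_nonneg hα0 hipos.le] : (0:ℝ) ≤ S + α * i + 1),
      mul_nonneg (mul_nonneg hα0 hipos.le) (sub_nonneg.mpr hα1)]
  have step1 : α ^ 2 / 2 ≤ (1 / ((i : ℝ) * ((i : ℝ) + 1))) * (S * (S + 1) / 2) := by
    rw [one_div, inv_mul_eq_div, le_div_iff₀ hii]
    linarith
  calc α ^ 2 / 2 ≤ (1 / ((i : ℝ) * ((i : ℝ) + 1))) * (S * (S + 1) / 2) := step1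
  _ ≤ (1 / ((i : ℝ) * ((i : ℝ) + 1))) * ∑ k ∈ Finset.range i, ((k : ℝ) + 1) * x k :=
      mul_le_mul_of_nonneg_left key (by positivity)
end

section
/- Let M be a matroid on [n] and D_A an α-uncontentious distribution for M. Then for any S ⊆ [n], the marginal distribution D_A^S (the distribution of A ∩ S where A ∼ D_A) is α-uncontentious for the restriction M_S. -/
/-- A matroid on ground set `Fin n`, given as the finite family of independent sets. -/
def IsMatroid {n : ℕ} (M : Finset (Finset (Fin n))) : Prop :=
  ∅ ∈ M ∧ (∀ X ∈ M, ∀ Y ⊆ X, Y ∈ M) ∧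
    ∀ X ∈ M, ∀ Y ∈ M, Y.card < X.card → ∃ i ∈ X \ Y, insert i Y ∈ M

/-- The rank of `X`: the maximum cardinality of an independent subset of `X`. -/
def mrank {n : ℕ} (M : Finset (Finset (Fin n))) (X : Finset (Fin n)) : ℕ :=
  (X.powerset.filter (· ∈ M)).sup Finset.card

/-- A (finitely supported) probability distribution on subsets of `Fin n`. -/
def IsDist {n : ℕ} (D : Finset (Fin n) → ℝ) : Prop :=
  (∀ A, 0 ≤ D A) ∧ ∑ A : Finset (Fin n), D A = 1

/-- `Pr_{A ∼ D}[i ∈ A]`. -/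
noncomputable def prElem {n : ℕ} (D : Finset (Fin n) → ℝ) (i : Fin n) : ℝ :=
  ∑ A : Finset (Fin n), if i ∈ A then D A else 0

/-- A contention resolution scheme: a distribution over maps `φ` with `φ A ⊆ A` and `φ A ∈ M`. -/
def IsCRS {n : ℕ} (M : Finset (Finset (Fin n)))
    (C : (Finset (Fin n) → Finset (Fin n)) → ℝ) : Prop :=
  (∀ φ, 0 ≤ C φ) ∧ (∑ φ : Finset (Fin n) → Finset (Fin n), C φ) = 1 ∧
    ∀ φ, C φ ≠ 0 → ∀ A, φ A ⊆ A ∧ φ A ∈ M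

/-- `Pr_{A ∼ D, φ ∼ C}[i ∈ φ(A) ∧ i ∈ A]`. -/
noncomputable def selProb {n : ℕ} (D : Finset (Fin n) → ℝ)
    (C : (Finset (Fin n) → Finset (Fin n)) → ℝ) (i : Fin n) : ℝ :=
  ∑ A : Finset (Fin n), ∑ φ : Finset (Fin n) → Finset (Fin n),
    if i ∈ φ A ∧ i ∈ A then D A * C φ else 0

/-- `D` is `α`-uncontentious for `M`: there is an `α`-balanced CRS, i.e. one with
`Pr[i ∈ φ(A) | i ∈ A] ≥ α` for every `i` with `Pr[i ∈ A] > 0`. -/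
def Uncontentious {n : ℕ} (α : ℝ) (M : Finset (Finset (Fin n)))
    (D : Finset (Fin n) → ℝ) : Prop :=
  ∃ C, IsCRS M C ∧ ∀ i : Fin n, 0 < prElem D i → α ≤ selProb D C i / prElem D i

private lemma collapse_aux {ι : Type*} [Fintype ι] [DecidableEq ι]
    (b : ι) (P : ι → Prop) [DecidablePred P] (c : ℝ) :
    ∑ x : ι, (if P x then (if b = x then c else 0) else 0) = if P b then c else 0 := by
  have h : ∀ x : ι, (if P x then (if b = x then c else 0) else 0)
      = if b = x then (if P x then c else 0) else 0 := by
    intro x; by_cases h1 : b = x <;> by_cases h2 : P x <;> simp [h1, h2]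
  simp only [h, Finset.sum_ite_eq, Finset.mem_univ, if_true]

private lemma marg {n : ℕ} (w : Finset (Fin n) → Finset (Fin n) → ℝ)
    (hw1 : ∀ Z, ∑ A : Finset (Fin n), w Z A = 1)
    (Z : Finset (Fin n)) (f : Finset (Fin n) → ℝ) :
    ∑ g : Finset (Fin n) → Finset (Fin n), f (g Z) * ∏ Z', w Z' (g Z')
      = ∑ A : Finset (Fin n), f A * w Z A := by
  classical
  have key : ∀ g : Finset (Fin n) → Finset (Fin n),
      f (g Z) * ∏ Z', w Z' (g Z')
        = ∏ Z', (if Z' = Z then f (g Z') * w Z' (g Z') else w Z' (g Z')) := by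
    intro g
    rw [Finset.prod_eq_mul_prod_sdiff_singleton_of_mem (Finset.mem_univ Z)
      (fun Z' => if Z' = Z then f (g Z') * w Z' (g Z') else w Z' (g Z')),
      Finset.prod_eq_mul_prod_sdiff_singleton_of_mem (Finset.mem_univ Z) (fun Z' => w Z' (g Z'))]
    rw [if_pos rfl, ← mul_assoc]
    congr 1
    exact Finset.prod_congr rfl (fun x hx => by
      rw [if_neg (by simpa using (Finset.mem_sdiff.mp hx).2)])
  calc ∑ g : Finset (Fin n) → Finset (Fin n), f (g Z) * ∏ Z', w Z' (g Z')
      = ∑ g : Finset (Fin n) → Finset (Fin n),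
          ∏ Z', (if Z' = Z then f (g Z') * w Z' (g Z') else w Z' (g Z')) :=
        Finset.sum_congr rfl (fun g _ => key g)
    _ = ∏ Z' : Finset (Fin n), ∑ A : Finset (Fin n),
          (if Z' = Z then f A * w Z' A else w Z' A) := by
        rw [Finset.prod_univ_sum (fun _ => Finset.univ)
          (fun Z' A => if Z' = Z then f A * w Z' A else w Z' A), Fintype.piFinset_univ]
    _ = ∑ A : Finset (Fin n), f A * w Z A := by
        rw [Finset.prod_eq_mul_prod_sdiff_singleton_of_mem (Finset.mem_univ Z)]
        have e1 : (∑ A : Finset (Fin n), if Z = Z then f A * w Z A else w Z A)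
            = ∑ A : Finset (Fin n), f A * w Z A :=
          Finset.sum_congr rfl (fun A _ => if_pos rfl)
        rw [e1]
        have : ∀ x ∈ Finset.univ \ {Z}, (∑ A : Finset (Fin n),
            if x = Z then f A * w x A else w x A) = 1 := by
          intro x hx
          rw [show (∑ A : Finset (Fin n), if x = Z then f A * w x A else w x A)
              = ∑ A : Finset (Fin n), w x A from Finset.sum_congr rfl
              (fun A _ => if_neg (by simpa using (Finset.mem_sdiff.mp hx).2)), hw1]
        rw [Finset.prod_eq_one this, mul_one]

/-- If `D` is `α`-uncontentious for `M`, then for any `S`, the marginal distribution of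
`A ∩ S` is `α`-uncontentious for the restriction `M_S`. -/
theorem marginal_uncontentious {n : ℕ} (M : Finset (Finset (Fin n))) (hM : IsMatroid M)
    (α : ℝ) (hα : α ∈ Set.Icc (0 : ℝ) 1) (D : Finset (Fin n) → ℝ) (hD : IsDist D)
    (hu : Uncontentious α M D) (S : Finset (Fin n)) :
    Uncontentious α (M.filter fun Y => Y ⊆ S)
      (fun Z => ∑ A : Finset (Fin n), if A ∩ S = Z then D A else 0) := by
  classical
  obtain ⟨C, ⟨hC0, hC1, hCM⟩, hbal⟩ := hu
  set D' : Finset (Fin n) → ℝ := fun Z => ∑ A : Finset (Fin n), if A ∩ S = Z then D A else 0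
    with hD'def
  have hD'0 : ∀ Z, 0 ≤ D' Z := fun Z =>
    Finset.sum_nonneg (fun A _ => by split_ifs <;> simp [hD.1 A])
  set w : Finset (Fin n) → Finset (Fin n) → ℝ := fun Z A =>
    if 0 < D' Z then (if A ∩ S = Z then D A / D' Z else 0) else (if A = ∅ then 1 else 0)
    with hwdef
  have hw0 : ∀ Z A, 0 ≤ w Z A := by
    intro Z A; show 0 ≤ (if 0 < D' Z then (if A ∩ S = Z then D A / D' Z else 0) else (if A = ∅ then 1 else 0))
    split_ifs with h1 h2 h3
    · exact div_nonneg (hD.1 A) (le_of_lt h1)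
    · exact le_rfl
    · exact zero_le_one
    · exact le_rfl
  have hw1 : ∀ Z, ∑ A : Finset (Fin n), w Z A = 1 := by
    intro Z; simp only [hwdef]
    by_cases h : 0 < D' Z
    · simp only [if_pos h]
      have : ∀ A : Finset (Fin n), (if A ∩ S = Z then D A / D' Z else 0)
          = (if A ∩ S = Z then D A else 0) / D' Z := by
        intro A; split_ifs <;> simp
      rw [Finset.sum_congr rfl (fun A _ => this A), ← Finset.sum_div]
      exact div_self (ne_of_gt h)
    · simp only [if_neg h]
      simp [Finset.sum_ite_eq']
  have hDw : ∀ Z A, D' Z * w Z A = if A ∩ S = Z then D A else 0 := by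
    intro Z A; simp only [hwdef]
    by_cases h : 0 < D' Z
    · rw [if_pos h]
      split_ifs with h2
      · rw [mul_div_cancel₀ _ (ne_of_gt h)]
      · exact mul_zero _
    · have hz : D' Z = 0 := le_antisymm (not_lt.mp h) (hD'0 Z)
      rw [hz, zero_mul]
      split_ifs with h2
      · exact ((Finset.sum_eq_zero_iff_of_nonneg (fun A _ => by
          split_ifs <;> simp [hD.1])).mp hz A (Finset.mem_univ A)
          ).symm.trans (if_pos h2)
      · rfl
  set G : (Finset (Fin n) → Finset (Fin n)) → ℝ := fun g => ∏ Z, w Z (g Z) with hGdef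
  have hG0 : ∀ g, 0 ≤ G g := fun g => Finset.prod_nonneg (fun Z _ => hw0 Z (g Z))
  have hGsum : ∑ g : Finset (Fin n) → Finset (Fin n), G g = 1 := by
    simp only [hGdef]
    rw [← Fintype.piFinset_univ, ← Finset.prod_univ_sum (fun _ => Finset.univ)
      (fun Z A => w Z A)]
    exact Finset.prod_eq_one (fun Z _ => hw1 Z)
  set T : (Finset (Fin n) → Finset (Fin n)) → (Finset (Fin n) → Finset (Fin n)) →
      (Finset (Fin n) → Finset (Fin n)) := fun φ g Z => φ (g Z) ∩ Z ∩ S with hTdef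
  set C' : (Finset (Fin n) → Finset (Fin n)) → ℝ := fun ψ =>
    ∑ φ : Finset (Fin n) → Finset (Fin n), ∑ g : Finset (Fin n) → Finset (Fin n),
      if T φ g = ψ then C φ * G g else 0 with hC'def
  refine ⟨C', ⟨?_, ?_, ?_⟩, ?_⟩
  · intro ψ
    exact Finset.sum_nonneg fun φ _ => Finset.sum_nonneg fun g _ => by
      split_ifs
      · exact mul_nonneg (hC0 φ) (hG0 g)
      · exact le_rfl
  · rw [Finset.sum_comm]
    have : ∀ φ : Finset (Fin n) → Finset (Fin n),
        (∑ ψ : Finset (Fin n) → Finset (Fin n), ∑ g : Finset (Fin n) → Finset (Fin n),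
          if T φ g = ψ then C φ * G g else 0) = C φ := by
      intro φ
      rw [Finset.sum_comm]
      have : ∀ g : Finset (Fin n) → Finset (Fin n),
          (∑ ψ : Finset (Fin n) → Finset (Fin n), if T φ g = ψ then C φ * G g else 0)
            = C φ * G g := by
        intro g; rw [Finset.sum_ite_eq]; simp
      rw [Finset.sum_congr rfl (fun g _ => this g), ← Finset.mul_sum, hGsum, mul_one]
    rw [Finset.sum_congr rfl (fun φ _ => this φ), hC1]
  · intro ψ hψ A
    have : ∃ φ g, (if T φ g = ψ then C φ * G g else 0) ≠ 0 := by
      by_contra h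
      push_neg at h
      exact hψ (by simp only [hC'def]; exact Finset.sum_eq_zero fun φ _ =>
        Finset.sum_eq_zero fun g _ => h φ g)
    obtain ⟨φ, g, hfg⟩ := this
    have hT : T φ g = ψ := by by_contra h; rw [if_neg h] at hfg; exact hfg rfl
    have hCφ : C φ ≠ 0 := by
      intro h; rw [if_pos hT, h, zero_mul] at hfg; exact hfg rfl
    rw [← hT]
    constructor
    · simp only [hTdef]
      exact (Finset.inter_subset_left).trans Finset.inter_subset_right
    · rw [Finset.mem_filter]
      refine ⟨hM.2.1 _ ((hCM φ hCφ (g A)).2) _ ?_, Finset.inter_subset_right⟩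
      exact (Finset.inter_subset_left).trans Finset.inter_subset_left
  · intro i hpos
    have hpr : prElem D' i = if i ∈ S then prElem D i else 0 := by
      unfold prElem
      have h1 : ∀ Z : Finset (Fin n), (if i ∈ Z then D' Z else 0)
          = ∑ A : Finset (Fin n), (if i ∈ Z then (if A ∩ S = Z then D A else 0) else 0) := by
        intro Z; split_ifs with h
        · rfl
        · exact Finset.sum_const_zero.symm
      rw [Finset.sum_congr rfl (fun Z _ => h1 Z), Finset.sum_comm]
      have h2 : ∀ A : Finset (Fin n),
          (∑ Z : Finset (Fin n), if i ∈ Z then (if A ∩ S = Z then D A else 0) else 0)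
            = if i ∈ A ∩ S then D A else 0 :=
        fun A => collapse_aux (A ∩ S) (fun Z => i ∈ Z) (D A)
      rw [Finset.sum_congr rfl (fun A _ => h2 A)]
      by_cases hS : i ∈ S
      · rw [if_pos hS]
        exact Finset.sum_congr rfl (fun A _ => by simp [Finset.mem_inter, hS])
      · rw [if_neg hS]
        exact Finset.sum_eq_zero (fun A _ => by simp [Finset.mem_inter, hS])
    have hiS : i ∈ S := by
      by_contra h
      rw [hpr, if_neg h] at hpos
      exact lt_irrefl 0 hpos
    have hsel : selProb D' C' i = selProb D C i := by
      unfold selProb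
      have stepA : ∀ Z : Finset (Fin n),
          (∑ ψ : Finset (Fin n) → Finset (Fin n),
            if i ∈ ψ Z ∧ i ∈ Z then D' Z * C' ψ else 0)
          = ∑ φ : Finset (Fin n) → Finset (Fin n), ∑ g : Finset (Fin n) → Finset (Fin n),
              if i ∈ T φ g Z ∧ i ∈ Z then D' Z * (C φ * G g) else 0 := by
        intro Z
        have e1 : ∀ ψ : Finset (Fin n) → Finset (Fin n),
            (if i ∈ ψ Z ∧ i ∈ Z then D' Z * C' ψ else 0)
            = ∑ φ : Finset (Fin n) → Finset (Fin n), ∑ g : Finset (Fin n) → Finset (Fin n),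
                (if i ∈ ψ Z ∧ i ∈ Z then (if T φ g = ψ then D' Z * (C φ * G g) else 0) else 0)
            := by
          intro ψ
          by_cases h : i ∈ ψ Z ∧ i ∈ Z
          · simp only [if_pos h, hC'def, Finset.mul_sum, mul_ite, mul_zero]
          · simp [if_neg h]
        rw [Finset.sum_congr rfl (fun ψ _ => e1 ψ), Finset.sum_comm]
        refine Finset.sum_congr rfl (fun φ _ => ?_)
        rw [Finset.sum_comm]
        refine Finset.sum_congr rfl (fun g _ => ?_)
        exact collapse_aux (T φ g) (fun ψ => i ∈ ψ Z ∧ i ∈ Z) (D' Z * (C φ * G g))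
      have stepB : ∀ (Z : Finset (Fin n)) (φ : Finset (Fin n) → Finset (Fin n)),
          (∑ g : Finset (Fin n) → Finset (Fin n),
            if i ∈ T φ g Z ∧ i ∈ Z then D' Z * (C φ * G g) else 0)
          = ∑ A : Finset (Fin n),
              if i ∈ φ A ∩ Z ∩ S ∧ i ∈ Z then (if A ∩ S = Z then D A * C φ else 0) else 0
          := by
        intro Z φ
        have e2 : ∀ g : Finset (Fin n) → Finset (Fin n),
            (if i ∈ T φ g Z ∧ i ∈ Z then D' Z * (C φ * G g) else 0)
            = (fun A => if i ∈ φ A ∩ Z ∩ S ∧ i ∈ Z then D' Z * C φ else 0) (g Z)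
                * ∏ Z', w Z' (g Z') := by
          intro g
          have hGg : G g = ∏ Z', w Z' (g Z') := rfl
          dsimp only [hTdef]
          split_ifs with h
          · rw [← hGg]; ring
          · exact (zero_mul _).symm
        rw [Finset.sum_congr rfl (fun g _ => e2 g),
          marg w hw1 Z (fun A => if i ∈ φ A ∩ Z ∩ S ∧ i ∈ Z then D' Z * C φ else 0)]
        refine Finset.sum_congr rfl (fun A _ => ?_)
        have hdw := hDw Z A
        split_ifs with h h2
        · rw [if_pos h2] at hdw
          calc D' Z * C φ * w Z A = D' Z * w Z A * C φ := by ring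
            _ = D A * C φ := by rw [hdw]
        · rw [if_neg h2] at hdw
          calc D' Z * C φ * w Z A = D' Z * w Z A * C φ := by ring
            _ = 0 := by rw [hdw]; ring
        · exact zero_mul _
      rw [Finset.sum_congr rfl (fun Z _ => (stepA Z).trans
        (Finset.sum_congr rfl (fun φ _ => stepB Z φ)))]
      rw [Finset.sum_comm]
      have stepC : ∀ φ : Finset (Fin n) → Finset (Fin n),
          (∑ Z : Finset (Fin n), ∑ A : Finset (Fin n),
            if i ∈ φ A ∩ Z ∩ S ∧ i ∈ Z then (if A ∩ S = Z then D A * C φ else 0) else 0)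
          = ∑ A : Finset (Fin n), if i ∈ φ A ∧ i ∈ A then D A * C φ else 0 := by
        intro φ
        rw [Finset.sum_comm]
        refine Finset.sum_congr rfl (fun A _ => ?_)
        rw [collapse_aux (A ∩ S) (fun Z => i ∈ φ A ∩ Z ∩ S ∧ i ∈ Z) (D A * C φ)]
        refine if_congr ?_ rfl rfl
        simp only [Finset.mem_inter]
        constructor
        · rintro ⟨⟨⟨h1, -⟩, -⟩, h2, -⟩; exact ⟨h1, h2⟩
        · rintro ⟨h1, h2⟩; exact ⟨⟨⟨h1, h2, hiS⟩, hiS⟩, h2, hiS⟩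
      rw [Finset.sum_congr rfl (fun φ _ => stepC φ), Finset.sum_comm]
    rw [hsel, hpr, if_pos hiS]
    exact hbal i (by rwa [hpr, if_pos hiS] at hpos)
end

section
/- Let M be a matroid on [n], α ∈ [0,1], ρ ∈ [0,α], and D_A an α-uncontentious distribution for M. Let T_ρ(A) denote the random subset of A obtained by keeping each element of A independently with probability ρ. Then there exists an element i ∈ [n] with Pr[i ∈ A] > 0 such that Pr_{A∼D_A, T_ρ}[i ∉ span_M(T_ρ(A)) | i ∈ A] ≥ α − ρ. -/
/-- The span of `X`: all elements whose insertion does not increase the rank. -/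
def spanM {n : ℕ} (M : Finset (Finset (Fin n))) (X : Finset (Fin n)) : Finset (Fin n) :=
  Finset.univ.filter fun i => mrank M (insert i X) = mrank M X

section AuxProof

variable {n : ℕ} {M : Finset (Finset (Fin n))}

lemma indep_le_mrank {B X : Finset (Fin n)} (hB : B ∈ M) (hBX : B ⊆ X) :
    B.card ≤ mrank M X :=
  Finset.le_sup (by simp [Finset.mem_filter, Finset.mem_powerset, hBX, hB])

lemma exists_basis (hM : IsMatroid M) (X : Finset (Fin n)) :
    ∃ B, B ⊆ X ∧ B ∈ M ∧ B.card = mrank M X := by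
  have hne : (X.powerset.filter (· ∈ M)).Nonempty :=
    ⟨∅, by simp [Finset.mem_filter, hM.1]⟩
  obtain ⟨B, hBmem, hcard⟩ := Finset.exists_mem_eq_sup _ hne Finset.card
  simp only [Finset.mem_filter, Finset.mem_powerset] at hBmem
  exact ⟨B, hBmem.1, hBmem.2, hcard.symm⟩

lemma mrank_mono {X Y : Finset (Fin n)} (h : X ⊆ Y) : mrank M X ≤ mrank M Y :=
  Finset.sup_mono (Finset.filter_subset_filter _ (Finset.powerset_mono.2 h))

lemma mrank_le_card (X : Finset (Fin n)) : mrank M X ≤ X.card :=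
  Finset.sup_le fun B hB => by
    simp only [Finset.mem_filter, Finset.mem_powerset] at hB
    exact Finset.card_le_card hB.1

lemma mrank_union_le (hM : IsMatroid M) (X S : Finset (Fin n)) :
    mrank M (X ∪ S) ≤ mrank M X + S.card := by
  obtain ⟨B, hBsub, hBM, hBcard⟩ := exists_basis hM (X ∪ S)
  rw [← hBcard]
  have h1 : (B ∩ X).card ≤ mrank M X :=
    indep_le_mrank (hM.2.1 B hBM _ Finset.inter_subset_left) Finset.inter_subset_right
  have h2 : (B \ X).card ≤ S.card := by
    apply Finset.card_le_card
    intro i hi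
    simp only [Finset.mem_sdiff] at hi
    rcases Finset.mem_union.1 (hBsub hi.1) with h | h
    · exact absurd h hi.2
    · exact h
  calc B.card = (B ∩ X).card + (B \ X).card := (Finset.card_inter_add_card_sdiff B X).symm
    _ ≤ mrank M X + S.card := Nat.add_le_add h1 h2

lemma mrank_spanning (hM : IsMatroid M) {X Y : Finset (Fin n)}
    (hY : ∀ j ∈ Y, mrank M (insert j X) = mrank M X) :
    mrank M (X ∪ Y) = mrank M X := by
  refine le_antisymm ?_ (mrank_mono Finset.subset_union_left)
  obtain ⟨B, hBsub, hBM, hBcard⟩ := exists_basis hM (X ∪ Y)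
  obtain ⟨B₀, hB₀sub, hB₀M, hB₀card⟩ := exists_basis hM X
  rw [← hBcard, ← hB₀card]
  by_contra hlt
  push_neg at hlt
  obtain ⟨i, himem, hins⟩ := hM.2.2 B hBM B₀ hB₀M hlt
  simp only [Finset.mem_sdiff] at himem
  have hcard : (insert i B₀).card = B₀.card + 1 := Finset.card_insert_of_notMem himem.2
  rcases Finset.mem_union.1 (hBsub himem.1) with h | h
  · have : (insert i B₀).card ≤ mrank M X :=
      indep_le_mrank hins (Finset.insert_subset h hB₀sub)
    omega
  · have : (insert i B₀).card ≤ mrank M (insert i X) :=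
      indep_le_mrank hins (Finset.insert_subset (Finset.mem_insert_self _ _)
        (hB₀sub.trans (Finset.subset_insert _ _)))
    rw [hY i h] at this
    omega

lemma key_count (hM : IsMatroid M) (A T : Finset (Fin n)) :
    mrank M A ≤ (A ∩ T).card + (A.filter (fun i => i ∉ spanM M (A ∩ T))).card := by
  set S := A.filter (fun i => i ∉ spanM M (A ∩ T)) with hS
  set Y := A.filter (fun i => i ∈ spanM M (A ∩ T)) with hYdef
  have hspan : mrank M ((A ∩ T) ∪ Y) = mrank M (A ∩ T) := by
    apply mrank_spanning hM
    intro j hj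
    rw [hYdef, Finset.mem_filter] at hj
    have := hj.2
    simp only [spanM, Finset.mem_filter, Finset.mem_univ, true_and] at this
    exact this
  have hAsub : A ⊆ ((A ∩ T) ∪ Y) ∪ S := by
    intro i hi
    by_cases h : i ∈ spanM M (A ∩ T)
    · exact Finset.mem_union_left _ (Finset.mem_union_right _ (Finset.mem_filter.2 ⟨hi, h⟩))
    · exact Finset.mem_union_right _ (Finset.mem_filter.2 ⟨hi, h⟩)
  calc mrank M A ≤ mrank M (((A ∩ T) ∪ Y) ∪ S) := mrank_mono hAsub
    _ ≤ mrank M ((A ∩ T) ∪ Y) + S.card := mrank_union_le hM _ _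
    _ = mrank M (A ∩ T) + S.card := by rw [hspan]
    _ ≤ (A ∩ T).card + S.card := Nat.add_le_add_right (mrank_le_card _) _

lemma sum_binom_weights (ρ : ℝ) (s : Finset (Fin n)) :
    ∑ T ∈ s.powerset, ρ ^ T.card * (1 - ρ) ^ (s.card - T.card) = 1 := by
  have h := Finset.prod_add (fun _ : Fin n => ρ) (fun _ => 1 - ρ) s
  simp only [Finset.prod_const] at h
  calc ∑ T ∈ s.powerset, ρ ^ T.card * (1 - ρ) ^ (s.card - T.card)
      = ∑ T ∈ s.powerset, ρ ^ T.card * (1 - ρ) ^ ((s \ T).card) :=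
        Finset.sum_congr rfl fun T hT => by
          rw [Finset.card_sdiff_of_subset (Finset.mem_powerset.1 hT)]
    _ = (ρ + (1 - ρ)) ^ s.card := h.symm
    _ = 1 := by norm_num

lemma sum_weights_total (ρ : ℝ) :
    ∑ T : Finset (Fin n), ρ ^ T.card * (1 - ρ) ^ (n - T.card) = 1 := by
  have := sum_binom_weights ρ (Finset.univ : Finset (Fin n))
  simpa [Finset.powerset_univ, Finset.card_univ] using this

lemma sum_weights_mem (ρ : ℝ) (j : Fin n) :
    ∑ T : Finset (Fin n), (if j ∈ T then ρ ^ T.card * (1 - ρ) ^ (n - T.card) else 0) = ρ := by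
  have hn : 0 < n := j.pos
  have hnot : ∑ T : Finset (Fin n),
      (if j ∉ T then ρ ^ T.card * (1 - ρ) ^ (n - T.card) else 0) = 1 - ρ := by
    rw [← Finset.sum_filter]
    have hfil : Finset.univ.filter (fun T : Finset (Fin n) => j ∉ T)
        = (Finset.univ.erase j).powerset := by
      ext T
      simp [Finset.mem_powerset, Finset.subset_erase]
    rw [hfil]
    have hcard : (Finset.univ.erase j).card = n - 1 := by
      rw [Finset.card_erase_of_mem (Finset.mem_univ j), Finset.card_univ, Fintype.card_fin]
    have hsum := sum_binom_weights ρ (Finset.univ.erase j)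
    rw [hcard] at hsum
    calc ∑ T ∈ (Finset.univ.erase j).powerset, ρ ^ T.card * (1 - ρ) ^ (n - T.card)
        = ∑ T ∈ (Finset.univ.erase j).powerset,
            (ρ ^ T.card * (1 - ρ) ^ (n - 1 - T.card)) * (1 - ρ) := by
          refine Finset.sum_congr rfl fun T hT => ?_
          have hTle : T.card ≤ n - 1 := by
            have := Finset.card_le_card (Finset.mem_powerset.1 hT)
            omega
          have : n - T.card = (n - 1 - T.card) + 1 := by omega
          rw [this, pow_succ]
          ring
      _ = 1 * (1 - ρ) := by rw [← Finset.sum_mul, hsum]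
      _ = 1 - ρ := one_mul _
  have hsplit : ∀ T : Finset (Fin n),
      (if j ∈ T then ρ ^ T.card * (1 - ρ) ^ (n - T.card) else 0)
        = ρ ^ T.card * (1 - ρ) ^ (n - T.card)
          - (if j ∉ T then ρ ^ T.card * (1 - ρ) ^ (n - T.card) else 0) := fun T => by
    by_cases h : j ∈ T <;> simp [h]
  rw [Finset.sum_congr rfl (fun T _ => hsplit T), Finset.sum_sub_distrib,
    sum_weights_total, hnot]
  ring

lemma sum_weights_inter (ρ : ℝ) (A : Finset (Fin n)) :
    ∑ T : Finset (Fin n), ρ ^ T.card * (1 - ρ) ^ (n - T.card) * ((A ∩ T).card : ℝ)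
      = ρ * A.card := by
  calc ∑ T : Finset (Fin n), ρ ^ T.card * (1 - ρ) ^ (n - T.card) * ((A ∩ T).card : ℝ)
      = ∑ T : Finset (Fin n), ∑ j ∈ A,
          (if j ∈ T then ρ ^ T.card * (1 - ρ) ^ (n - T.card) else 0) := by
        refine Finset.sum_congr rfl fun T _ => ?_
        have : ((A ∩ T).card : ℝ) = ∑ j ∈ A, (if j ∈ T then (1 : ℝ) else 0) := by
          rw [Finset.sum_boole, Finset.filter_mem_eq_inter]
        rw [this, Finset.mul_sum]
        exact Finset.sum_congr rfl fun j _ => by by_cases h : j ∈ T <;> simp [h]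
    _ = ∑ j ∈ A, ∑ T : Finset (Fin n),
          (if j ∈ T then ρ ^ T.card * (1 - ρ) ^ (n - T.card) else 0) := Finset.sum_comm
    _ = ∑ j ∈ A, ρ := Finset.sum_congr rfl fun j _ => sum_weights_mem ρ j
    _ = ρ * A.card := by rw [Finset.sum_const, nsmul_eq_mul, mul_comm]

lemma sum_indicator_card {c : ℝ} (P : Fin n → Prop) [DecidablePred P] :
    ∑ i : Fin n, (if P i then c else 0) = ((Finset.univ.filter P).card : ℝ) * c := by
  rw [← Finset.sum_filter, Finset.sum_const, nsmul_eq_mul]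

lemma sum_prElem (D : Finset (Fin n) → ℝ) :
    ∑ i : Fin n, prElem D i = ∑ A : Finset (Fin n), D A * (A.card : ℝ) := by
  unfold prElem
  rw [Finset.sum_comm]
  refine Finset.sum_congr rfl fun A _ => ?_
  rw [sum_indicator_card (fun i => i ∈ A)]
  simp [mul_comm]

lemma sum_selProb_le (hM : IsMatroid M) {D : Finset (Fin n) → ℝ} (hD : IsDist D)
    {C : (Finset (Fin n) → Finset (Fin n)) → ℝ} (hC : IsCRS M C) :
    ∑ i : Fin n, selProb D C i ≤ ∑ A : Finset (Fin n), D A * (mrank M A : ℝ) := by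
  unfold selProb
  rw [Finset.sum_comm]
  have step : ∀ A : Finset (Fin n),
      ∑ i : Fin n, ∑ φ : Finset (Fin n) → Finset (Fin n),
          (if i ∈ φ A ∧ i ∈ A then D A * C φ else 0)
        ≤ D A * (mrank M A : ℝ) := by
    intro A
    rw [Finset.sum_comm]
    calc ∑ φ : Finset (Fin n) → Finset (Fin n), ∑ i : Fin n,
            (if i ∈ φ A ∧ i ∈ A then D A * C φ else 0)
        = ∑ φ : Finset (Fin n) → Finset (Fin n),
            (((φ A ∩ A).card : ℝ)) * (D A * C φ) := by
          refine Finset.sum_congr rfl fun φ _ => ?_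
          rw [sum_indicator_card (fun i => i ∈ φ A ∧ i ∈ A)]
          have hfil : Finset.univ.filter (fun i => i ∈ φ A ∧ i ∈ A) = φ A ∩ A := by
            ext i; simp [Finset.mem_inter]
          rw [hfil]
      _ ≤ ∑ φ : Finset (Fin n) → Finset (Fin n),
            ((mrank M A : ℝ)) * (D A * C φ) := by
          refine Finset.sum_le_sum fun φ _ => ?_
          by_cases h : C φ = 0
          · simp [h]
          · refine mul_le_mul_of_nonneg_right ?_ (mul_nonneg (hD.1 A) (hC.1 φ))
            have hmem : φ A ∩ A ∈ M :=
              hM.2.1 (φ A) ((hC.2.2 φ h A).2) _ Finset.inter_subset_left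
            exact_mod_cast indep_le_mrank hmem Finset.inter_subset_right
      _ = D A * (mrank M A : ℝ) := by
          rw [← Finset.mul_sum, ← Finset.mul_sum, hC.2.1]
          ring
  exact Finset.sum_le_sum fun A _ => step A

theorem main_ineq {n : ℕ} (hn : 0 < n)
    (M : Finset (Finset (Fin n))) (hM : IsMatroid M)
    (α ρ : ℝ) (hα : α ∈ Set.Icc (0 : ℝ) 1) (hρ : ρ ∈ Set.Icc (0 : ℝ) α)
    (D : Finset (Fin n) → ℝ) (hD : IsDist D) (hu : Uncontentious α M D)
    (hpos : ∀ i : Fin n, 0 < prElem D i) :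
    (α - ρ) * ∑ i : Fin n, prElem D i ≤
      ∑ i : Fin n, ∑ T : Finset (Fin n), ∑ A : Finset (Fin n),
        if i ∈ A ∧ i ∉ spanM M (A ∩ T) then
          ρ ^ T.card * (1 - ρ) ^ (n - T.card) * D A
        else 0 := by
  obtain ⟨C, hC, hbal⟩ := hu
  have hρ1 : ρ ≤ 1 := hρ.2.trans hα.2
  have hw0 : ∀ T : Finset (Fin n), 0 ≤ ρ ^ T.card * (1 - ρ) ^ (n - T.card) :=
    fun T => mul_nonneg (pow_nonneg hρ.1 _) (pow_nonneg (by linarith) _)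
  calc (α - ρ) * ∑ i : Fin n, prElem D i
      = α * (∑ i : Fin n, prElem D i) - ρ * (∑ i : Fin n, prElem D i) := by ring
    _ ≤ (∑ A : Finset (Fin n), D A * (mrank M A : ℝ))
          - ρ * (∑ A : Finset (Fin n), D A * (A.card : ℝ)) := by
        have h1 : α * ∑ i : Fin n, prElem D i ≤ ∑ i : Fin n, selProb D C i := by
          rw [Finset.mul_sum]
          exact Finset.sum_le_sum fun i _ => (le_div_iff₀ (hpos i)).1 (hbal i (hpos i))
        have h2 := sum_selProb_le hM hD hC
        have h3 := sum_prElem D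
        rw [h3] at h1 ⊢
        linarith
    _ = ∑ T : Finset (Fin n), ∑ A : Finset (Fin n),
          (ρ ^ T.card * (1 - ρ) ^ (n - T.card) * D A)
            * ((mrank M A : ℝ) - ((A ∩ T).card : ℝ)) := by
        simp only [mul_sub, Finset.sum_sub_distrib]
        congr 1
        · rw [Finset.sum_comm]
          refine (Finset.sum_congr rfl fun A _ => ?_).symm
          calc ∑ T : Finset (Fin n),
                ρ ^ T.card * (1 - ρ) ^ (n - T.card) * D A * ((mrank M A : ℝ))
              = ∑ T : Finset (Fin n),
                  ρ ^ T.card * (1 - ρ) ^ (n - T.card) * (D A * (mrank M A : ℝ)) := by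
                refine Finset.sum_congr rfl fun T _ => by ring
            _ = (∑ T : Finset (Fin n), ρ ^ T.card * (1 - ρ) ^ (n - T.card))
                  * (D A * (mrank M A : ℝ)) := by rw [Finset.sum_mul]
            _ = D A * (mrank M A : ℝ) := by rw [sum_weights_total, one_mul]
        · rw [Finset.sum_comm, Finset.mul_sum]
          refine (Finset.sum_congr rfl fun A _ => ?_).symm
          calc ∑ T : Finset (Fin n),
                ρ ^ T.card * (1 - ρ) ^ (n - T.card) * D A * (((A ∩ T).card : ℝ))
              = ∑ T : Finset (Fin n),
                  D A * (ρ ^ T.card * (1 - ρ) ^ (n - T.card) * ((A ∩ T).card : ℝ)) := by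
                refine Finset.sum_congr rfl fun T _ => by ring
            _ = D A * (ρ * (A.card : ℝ)) := by rw [← Finset.mul_sum, sum_weights_inter]
            _ = ρ * (D A * (A.card : ℝ)) := by ring
    _ ≤ ∑ T : Finset (Fin n), ∑ A : Finset (Fin n),
          (ρ ^ T.card * (1 - ρ) ^ (n - T.card) * D A)
            * (((A.filter fun i => i ∉ spanM M (A ∩ T)).card : ℝ)) := by
        refine Finset.sum_le_sum fun T _ => Finset.sum_le_sum fun A _ => ?_
        refine mul_le_mul_of_nonneg_left ?_ (mul_nonneg (hw0 T) (hD.1 A))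
        have h := key_count hM A T
        have h' : (mrank M A : ℝ) ≤ ((A ∩ T).card : ℝ)
            + ((A.filter fun i => i ∉ spanM M (A ∩ T)).card : ℝ) := by exact_mod_cast h
        linarith
    _ = ∑ i : Fin n, ∑ T : Finset (Fin n), ∑ A : Finset (Fin n),
          (if i ∈ A ∧ i ∉ spanM M (A ∩ T) then
            ρ ^ T.card * (1 - ρ) ^ (n - T.card) * D A else 0) := by
        symm
        rw [Finset.sum_comm]
        refine Finset.sum_congr rfl fun T _ => ?_
        rw [Finset.sum_comm]
        refine Finset.sum_congr rfl fun A _ => ?_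
        rw [sum_indicator_card (fun i => i ∈ A ∧ i ∉ spanM M (A ∩ T))]
        have hfil : Finset.univ.filter (fun i => i ∈ A ∧ i ∉ spanM M (A ∩ T))
            = A.filter (fun i => i ∉ spanM M (A ∩ T)) := by
          ext i; simp
        rw [hfil, mul_comm]

end AuxProof

/-- There is an element `i` (active with positive probability) such that, sampling `A ∼ D`
and an independent subsample `T_ρ` (each element kept independently with probability `ρ`),
`Pr[i ∉ span(T_ρ(A)) | i ∈ A] ≥ α − ρ`.  Here the subsample of `A` is realized as `A ∩ T`
with `T` a `ρ`-biased random subset of the ground set. -/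
theorem exists_unspanned_after_subsampling {n : ℕ} (hn : 0 < n)
    (M : Finset (Finset (Fin n))) (hM : IsMatroid M)
    (α ρ : ℝ) (hα : α ∈ Set.Icc (0 : ℝ) 1) (hρ : ρ ∈ Set.Icc (0 : ℝ) α)
    (D : Finset (Fin n) → ℝ) (hD : IsDist D) (hu : Uncontentious α M D)
    (hpos : ∀ i : Fin n, 0 < prElem D i) :
    ∃ i : Fin n, 0 < prElem D i ∧
      α - ρ ≤
        (∑ T : Finset (Fin n), ∑ A : Finset (Fin n),
            if i ∈ A ∧ i ∉ spanM M (A ∩ T) then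
              ρ ^ T.card * (1 - ρ) ^ (n - T.card) * D A
            else 0) / prElem D i := by
  by_contra hcon
  push_neg at hcon
  have hne : (Finset.univ : Finset (Fin n)).Nonempty := ⟨⟨0, hn⟩, Finset.mem_univ _⟩
  have hlt : ∑ i : Fin n, (∑ T : Finset (Fin n), ∑ A : Finset (Fin n),
        if i ∈ A ∧ i ∉ spanM M (A ∩ T) then
          ρ ^ T.card * (1 - ρ) ^ (n - T.card) * D A else 0)
      < ∑ i : Fin n, (α - ρ) * prElem D i := by
    refine Finset.sum_lt_sum_of_nonempty hne fun i _ => ?_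
    exact (div_lt_iff₀ (hpos i)).1 (hcon i (hpos i))
  rw [← Finset.mul_sum] at hlt
  exact absurd (main_ineq hn M hM α ρ hα hρ D hD hu hpos) (not_le.2 hlt)
end

section
/- Fix a permutation π of [n]. Sample a uniformly random permutation σ' of [n+1] and let T = prefix(σ', n+1), the set of elements of [n+1] appearing before n+1 in σ'. Then for every i ∈ [n], the random set π^{i-1} ∩ T (where π^{i-1} := {π(1),...,π(i-1)}) has the same distribution as prefix(σ, π(i)) for σ a uniformly random permutation of π^i := {π(1),...,π(i)}. -/
/-- The set of elements arriving strictly before `e` in the arrival order `σ`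
(where `σ j` is the `j`-th arriving element). -/
def prefixSet {m : ℕ} (σ : Equiv.Perm (Fin m)) (e : Fin m) : Finset (Fin m) :=
  Finset.univ.filter fun x => σ.symm x < σ.symm e

/-- `prevSet π i = {π j | j < i}`, the elements preceding `π i` in the order `π`. -/
def prevSet {n : ℕ} (π : Equiv.Perm (Fin n)) (i : Fin n) : Finset (Fin n) :=
  (Finset.univ.filter fun j => j < i).image π

/-- The elements of a list `l` appearing strictly before `e`, as a finset. -/
def listPrefix {α : Type*} [DecidableEq α] (l : List α) (e : α) : Finset α :=
  (l.takeWhile (· ≠ e)).toFinset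

/-- Restrict a subset of `Fin (n+1)` to a subset of `Fin n` (dropping the last element). -/
def downSet {n : ℕ} (T : Finset (Fin (n + 1))) : Finset (Fin n) :=
  Finset.univ.filter fun x : Fin n => x.castSucc ∈ T

namespace PfxAux

open List Equiv Finset

variable {n : ℕ}

/-- embed `Fin n` into `Fin (n+1)`, sending `e` to `last n` and others to `castSucc`. -/
def up (e : Fin n) (x : Fin n) : Fin (n + 1) :=
  if x = e then Fin.last n else x.castSucc

lemma up_injective (e : Fin n) : Function.Injective (up e) := by
  intro x y hxy
  unfold up at hxy
  split_ifs at hxy with h1 h2 h2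
  · rw [h1, h2]
  · exact absurd hxy.symm (Fin.castSucc_lt_last y).ne
  · exact absurd hxy (Fin.castSucc_lt_last x).ne
  · exact Fin.castSucc_injective n hxy

/-- partial inverse of `up` restricted to `insert e P`. -/
def hm (P : Finset (Fin n)) (e : Fin n) (z : Fin (n + 1)) : Option (Fin n) :=
  Fin.lastCases (some e) (fun x => if x ∈ P then some x else none) z

lemma hm_up {P : Finset (Fin n)} {e : Fin n} (he : e ∉ P) {x : Fin n}
    (hx : x ∈ insert e P) : hm P e (up e x) = some x := by
  rcases Finset.mem_insert.1 hx with h | h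
  · subst h; simp [up, hm]
  · have hxe : x ≠ e := fun hxe => he (hxe ▸ h)
    simp [up, hxe, hm, h]

lemma hm_eq_some {P : Finset (Fin n)} {e : Fin n} (he : e ∉ P) {z : Fin (n + 1)} {x : Fin n}
    (h : hm P e z = some x) : x ∈ insert e P ∧ z = up e x := by
  induction z using Fin.lastCases with
  | last =>
    simp only [hm, Fin.lastCases_last, Option.some_inj] at h
    subst h
    exact ⟨Finset.mem_insert_self _ _, by simp [up]⟩
  | cast y =>
    simp only [hm, Fin.lastCases_castSucc] at h
    by_cases hy : y ∈ P
    · rw [if_pos hy, Option.some_inj] at h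
      subst h
      have hxe : y ≠ e := fun hxe => he (hxe ▸ hy)
      exact ⟨Finset.mem_insert_of_mem hy, by simp [up, hxe]⟩
    · simp [hy] at h

lemma hm_none {P : Finset (Fin n)} {e : Fin n} (he : e ∉ P) {z : Fin (n + 1)}
    (h : ∀ x ∈ insert e P, z ≠ up e x) : hm P e z = none := by
  cases hz : hm P e z with
  | none => rfl
  | some x =>
    obtain ⟨hx, rfl⟩ := hm_eq_some he hz
    exact absurd rfl (h x hx)

/-- the induced ordering of the elements of `insert e P` given by `σ'`. -/
def fmap (P : Finset (Fin n)) (e : Fin n) (σ' : Equiv.Perm (Fin (n + 1))) : List (Fin n) :=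
  (List.ofFn σ').filterMap (hm P e)

lemma mem_fmap {P : Finset (Fin n)} {e : Fin n} (he : e ∉ P) {σ' : Equiv.Perm (Fin (n + 1))}
    {x : Fin n} : x ∈ fmap P e σ' ↔ x ∈ insert e P := by
  constructor
  · intro hx
    obtain ⟨z, _, hz⟩ := List.mem_filterMap.1 hx
    exact (hm_eq_some he hz).1
  · intro hx
    refine List.mem_filterMap.2 ⟨up e x, ?_, hm_up he hx⟩
    exact List.mem_ofFn.2 ⟨σ'.symm (up e x), σ'.apply_symm_apply _⟩

lemma nodup_fmap {P : Finset (Fin n)} {e : Fin n} (he : e ∉ P)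
    {σ' : Equiv.Perm (Fin (n + 1))} : (fmap P e σ').Nodup := by
  refine List.Nodup.filterMap ?_ (List.nodup_ofFn.2 σ'.injective)
  intro a a' b hb hb'
  rw [(hm_eq_some he hb).2, (hm_eq_some he hb').2]

lemma fmap_perm {P : Finset (Fin n)} {e : Fin n} (he : e ∉ P)
    {σ' : Equiv.Perm (Fin (n + 1))} : fmap P e σ' ~ (insert e P).toList := by
  refine List.perm_of_nodup_nodup_toFinset_eq (nodup_fmap he) (Finset.nodup_toList _) ?_
  ext x
  simp [List.mem_toFinset, mem_fmap he, Finset.mem_toList]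

lemma indexOf_ofFn (σ' : Equiv.Perm (Fin (n + 1))) (y : Fin (n + 1)) :
    List.idxOf y (List.ofFn σ') = (σ'.symm y : ℕ) := by
  have hnd : (List.ofFn σ').Nodup := List.nodup_ofFn.2 σ'.injective
  have hlen : ((σ'.symm y : ℕ)) < (List.ofFn σ').length := by
    simp [List.length_ofFn, (σ'.symm y).isLt]
  have : (List.ofFn σ').get ⟨(σ'.symm y : ℕ), hlen⟩ = y := by
    rw [List.get_ofFn]
    simp [Fin.cast]
  conv_lhs => rw [← this]
  exact List.get_idxOf hnd _

lemma takeWhile_ne_cons_self {α : Type*} [DecidableEq α] (e : α) (l : List α) :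
    (e :: l).takeWhile (· ≠ e) = [] := by
  simp [List.takeWhile_cons]

lemma takeWhile_ne_cons {α : Type*} [DecidableEq α] {a e : α} (h : a ≠ e) (l : List α) :
    (a :: l).takeWhile (· ≠ e) = a :: l.takeWhile (· ≠ e) := by
  simp [List.takeWhile_cons, h]

lemma mem_takeWhile_ne_iff {α : Type*} [DecidableEq α] :
    ∀ {l : List α}, l.Nodup → ∀ {e : α}, e ∈ l → ∀ {x : α},
      (x ∈ l.takeWhile (· ≠ e) ↔ x ∈ l ∧ l.idxOf x < l.idxOf e) := by
  intro l
  induction l with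
  | nil => intro _ e he; simp at he
  | cons a t IH =>
    intro hnd e he x
    rcases eq_or_ne a e with rfl | hae
    · simp [List.takeWhile_cons]
    · have het : e ∈ t := by
        rcases List.mem_cons.1 he with h | h
        · exact absurd h.symm hae
        · exact h
      have hndt : t.Nodup := (List.nodup_cons.1 hnd).2
      rw [takeWhile_ne_cons hae]
      rcases eq_or_ne x a with rfl | hxa
      · constructor
        · intro _
          refine ⟨List.mem_cons_self, ?_⟩
          rw [List.idxOf_cons_self, List.idxOf_cons_ne _ (by exact hae)]
          exact Nat.succ_pos _
        · intro _; exact List.mem_cons_self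
      · simp only [List.mem_cons, hxa, false_or]
        rw [List.idxOf_cons_ne _ (fun h => hxa h.symm), List.idxOf_cons_ne _ hae]
        constructor
        · intro hx
          have := (IH hndt het).1 hx
          exact ⟨this.1, Nat.succ_lt_succ this.2⟩
        · intro ⟨h1, h2⟩
          exact (IH hndt het).2 ⟨h1, Nat.lt_of_succ_lt_succ h2⟩

lemma takeWhile_filterMap {P : Finset (Fin n)} {e : Fin n} (he : e ∉ P) :
    ∀ (L : List (Fin (n + 1))),
      ((L.filterMap (hm P e)).takeWhile (· ≠ e)) =
        (L.takeWhile (· ≠ Fin.last n)).filterMap (hm P e) := by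
  intro L
  induction L with
  | nil => simp
  | cons z t IH =>
    rcases eq_or_ne z (Fin.last n) with rfl | hz
    · have h1 : hm P e (Fin.last n) = some e := by simp [hm]
      rw [List.filterMap_cons, h1, takeWhile_ne_cons_self, takeWhile_ne_cons_self,
        List.filterMap_nil]
    · rw [takeWhile_ne_cons hz]
      cases hzv : hm P e z with
      | none => rw [List.filterMap_cons, hzv, List.filterMap_cons, hzv, IH]
      | some x =>
        obtain ⟨hx, rfl⟩ := hm_eq_some he hzv
        have hxe : x ≠ e := by
          intro hxe
          subst hxe
          simp [up] at hz
        rw [List.filterMap_cons, hzv, List.filterMap_cons, hzv, takeWhile_ne_cons hxe, IH]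

lemma mem_listPrefix_fmap {P : Finset (Fin n)} {e : Fin n} (he : e ∉ P)
    {σ' : Equiv.Perm (Fin (n + 1))} {x : Fin n} :
    x ∈ listPrefix (fmap P e σ') e ↔
      x ∈ P ∧ σ'.symm x.castSucc < σ'.symm (Fin.last n) := by
  have hnd : (List.ofFn σ').Nodup := List.nodup_ofFn.2 σ'.injective
  have hlast : Fin.last n ∈ List.ofFn σ' :=
    List.mem_ofFn.2 ⟨σ'.symm _, σ'.apply_symm_apply _⟩
  unfold listPrefix fmap
  rw [List.mem_toFinset, takeWhile_filterMap he, List.mem_filterMap]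
  constructor
  · rintro ⟨z, hz, hzx⟩
    obtain ⟨hx, rfl⟩ := hm_eq_some he hzx
    have hmem := (mem_takeWhile_ne_iff hnd hlast).1 hz
    have hxe : x ≠ e := by
      intro hxe; subst hxe
      simp [up] at hmem
    have hxP : x ∈ P := by
      rcases Finset.mem_insert.1 hx with h | h
      · exact absurd h hxe
      · exact h
    refine ⟨hxP, ?_⟩
    have := hmem.2
    rwa [indexOf_ofFn, indexOf_ofFn, up, if_neg hxe, ← Fin.lt_iff_val_lt_val] at this
  · rintro ⟨hxP, hlt⟩
    have hxe : x ≠ e := fun hxe => he (hxe ▸ hxP)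
    refine ⟨up e x, ?_, hm_up he (Finset.mem_insert_of_mem hxP)⟩
    rw [mem_takeWhile_ne_iff hnd hlast]
    refine ⟨List.mem_ofFn.2 ⟨σ'.symm _, σ'.apply_symm_apply _⟩, ?_⟩
    rw [indexOf_ofFn, indexOf_ofFn, up, if_neg hxe]
    exact hlt

lemma cond_iff_listPrefix {P : Finset (Fin n)} {e : Fin n} (he : e ∉ P)
    (σ' : Equiv.Perm (Fin (n + 1))) :
    P ∩ downSet (prefixSet σ' (Fin.last n)) = listPrefix (fmap P e σ') e := by
  ext x
  rw [mem_listPrefix_fmap he]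
  simp [downSet, prefixSet]

end PfxAux

namespace PfxAux

open List Equiv Finset

variable {n : ℕ}

lemma fmap_trans {P : Finset (Fin n)} {e : Fin n} (he : e ∉ P)
    {l₁ l₂ : List (Fin n)} (h₁ : l₁ ~ (insert e P).toList) (h₂ : l₂ ~ (insert e P).toList) :
    ∃ g : Equiv.Perm (Fin (n + 1)), ∀ σ' : Equiv.Perm (Fin (n + 1)),
      fmap P e σ' = l₁ → fmap P e (σ'.trans g) = l₂ := by
  classical
  have hmem₁ : ∀ x, x ∈ l₁ ↔ x ∈ insert e P := fun x => h₁.mem_iff.trans (Finset.mem_toList)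
  have hmem₂ : ∀ x, x ∈ l₂ ↔ x ∈ insert e P := fun x => h₂.mem_iff.trans (Finset.mem_toList)
  have hnd₁ : l₁.Nodup := h₁.nodup_iff.2 (Finset.nodup_toList _)
  have hnd₂ : l₂.Nodup := h₂.nodup_iff.2 (Finset.nodup_toList _)
  have hlen : l₂.length = l₁.length := h₂.length_eq.trans h₁.length_eq.symm
  set E : Finset (Fin (n + 1)) := (l₁.map (up e)).toFinset with hE
  have hmemE : ∀ z, z ∈ E ↔ ∃ x ∈ insert e P, up e x = z := by
    intro z
    rw [hE, List.mem_toFinset, List.mem_map]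
    constructor
    · rintro ⟨x, hx, rfl⟩; exact ⟨x, (hmem₁ x).1 hx, rfl⟩
    · rintro ⟨x, hx, rfl⟩; exact ⟨x, (hmem₁ x).2 hx, rfl⟩
  have hcardE : Fintype.card {z // z ∈ E} = l₁.length := by
    rw [Fintype.card_coe, hE, List.toFinset_card_of_nodup (hnd₁.map (up_injective e)),
      List.length_map]
  have hu₁mem : ∀ k : Fin l₁.length, up e (l₁.get k) ∈ E := by
    intro k
    exact (hmemE _).2 ⟨l₁.get k, (hmem₁ _).1 (l₁.get_mem _), rfl⟩
  have hu₂mem : ∀ k : Fin l₁.length, up e (l₂.get (Fin.cast hlen.symm k)) ∈ E := by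
    intro k
    exact (hmemE _).2 ⟨_, (hmem₂ _).1 (l₂.get_mem _), rfl⟩
  set u₁ : Fin l₁.length → {z // z ∈ E} := fun k => ⟨up e (l₁.get k), hu₁mem k⟩ with hu₁
  set u₂ : Fin l₁.length → {z // z ∈ E} :=
    fun k => ⟨up e (l₂.get (Fin.cast hlen.symm k)), hu₂mem k⟩ with hu₂
  have hinj₁ : Function.Injective u₁ := by
    intro a b hab
    have := up_injective e (congrArg Subtype.val hab)
    exact (hnd₁.get_inj_iff).1 this
  have hinj₂ : Function.Injective u₂ := by
    intro a b hab
    have := (hnd₂.get_inj_iff).1 (up_injective e (congrArg Subtype.val hab))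
    exact Fin.cast_injective _ this
  have hbij₁ : Function.Bijective u₁ :=
    (Fintype.bijective_iff_injective_and_card u₁).2 ⟨hinj₁, by simp [hcardE]⟩
  have hbij₂ : Function.Bijective u₂ :=
    (Fintype.bijective_iff_injective_and_card u₂).2 ⟨hinj₂, by simp [hcardE]⟩
  set e₁ := Equiv.ofBijective u₁ hbij₁ with he₁
  set e₂ := Equiv.ofBijective u₂ hbij₂ with he₂
  set g : Equiv.Perm (Fin (n + 1)) := Equiv.Perm.extendDomain (e₂.trans e₁.symm) e₁ with hg
  set ψ : Fin n → Fin n := fun x =>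
    if hx : x ∈ l₁ then l₂.get (Fin.cast hlen.symm ⟨l₁.idxOf x, List.idxOf_lt_length_iff.2 hx⟩)
    else x with hψ
  have hψget : ∀ j : Fin l₁.length, ψ (l₁.get j) = l₂.get (Fin.cast hlen.symm j) := by
    intro j
    have hxj : l₁.get j ∈ l₁ := l₁.get_mem _
    simp only [hψ]
    rw [dif_pos hxj]
    congr 1
    apply Fin.ext
    exact List.get_idxOf hnd₁ j
  have hgz : ∀ z, hm P e (g z) = (hm P e z).map ψ := by
    intro z
    by_cases hz : z ∈ E
    · obtain ⟨x, hx, rfl⟩ := (hmemE z).1 hz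
      have hxl₁ : x ∈ l₁ := (hmem₁ x).2 hx
      set k : Fin l₁.length := ⟨l₁.idxOf x, List.idxOf_lt_length_iff.2 hxl₁⟩ with hk
      have hgetk : l₁.get k = x := List.idxOf_get _
      have he₁k : e₁ k = ⟨up e x, hz⟩ := by
        rw [he₁]; apply Subtype.ext; simp [hu₁, ← hgetk]
      have hgval : g (up e x) = up e (l₂.get (Fin.cast hlen.symm k)) := by
        rw [hg, Equiv.Perm.extendDomain_apply_subtype _ e₁ hz]
        rw [← he₁k, Equiv.symm_apply_apply, Equiv.trans_apply, Equiv.apply_symm_apply]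
        rfl
      rw [hgval, hm_up he ((hmem₂ _).1 (l₂.get_mem _)), hm_up he hx]
      simp only [Option.map_some]
      congr 1
      rw [← hgetk, hψget k]
    · have hgzz : g z = z := by
        rw [hg]; exact Equiv.Perm.extendDomain_apply_not_subtype _ e₁ hz
      have hnone : hm P e z = none := by
        apply hm_none he
        intro x hx hzx
        exact hz ((hmemE z).2 ⟨x, hx, hzx.symm⟩)
      rw [hgzz, hnone]; rfl
  refine ⟨g, fun σ' hσ' => ?_⟩
  have h1 : List.ofFn ⇑(σ'.trans g) = List.map g (List.ofFn σ') := by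
    rw [List.map_ofFn]; rfl
  have h2 : fmap P e (σ'.trans g) = List.map ψ (fmap P e σ') := by
    unfold fmap
    rw [h1, List.filterMap_map, List.map_filterMap]
    congr 1
    funext z
    exact hgz z
  rw [h2, hσ']
  apply List.ext_get
  · simp [hlen]
  · intro m hm₁ hm₂
    rw [show (List.map ψ l₁).get ⟨m, hm₁⟩ = ψ (l₁.get ⟨↑(⟨m, hm₁⟩ : Fin (List.map ψ l₁).length), by simpa using hm₁⟩) from by simp]
    have hml : m < l₁.length := by simpa using hm₁
    have := hψget ⟨m, hml⟩
    rw [show (⟨↑(⟨m, hm₁⟩ : Fin (List.map ψ l₁).length), by simpa using hm₁⟩ : Fin l₁.length)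
        = ⟨m, hml⟩ from rfl, this]
    congr 1

lemma fiber_le {P : Finset (Fin n)} {e : Fin n} (he : e ∉ P)
    {l₁ l₂ : List (Fin n)} (h₁ : l₁ ~ (insert e P).toList) (h₂ : l₂ ~ (insert e P).toList) :
    (Finset.univ.filter fun σ' : Equiv.Perm (Fin (n + 1)) => fmap P e σ' = l₁).card ≤
      (Finset.univ.filter fun σ' : Equiv.Perm (Fin (n + 1)) => fmap P e σ' = l₂).card := by
  classical
  obtain ⟨g, hg⟩ := fmap_trans he h₁ h₂
  apply Finset.card_le_card_of_injOn (fun σ' => σ'.trans g)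
  · intro σ' hσ'
    rw [Finset.mem_coe, Finset.mem_filter] at hσ' ⊢
    exact ⟨Finset.mem_univ _, hg σ' hσ'.2⟩
  · intro a _ b _ hab
    have := congrArg (fun τ : Equiv.Perm (Fin (n + 1)) => τ.trans g.symm) hab
    simpa [Equiv.trans_assoc] using this

lemma fiber_card_eq {P : Finset (Fin n)} {e : Fin n} (he : e ∉ P)
    {l₁ l₂ : List (Fin n)} (h₁ : l₁ ~ (insert e P).toList) (h₂ : l₂ ~ (insert e P).toList) :
    (Finset.univ.filter fun σ' : Equiv.Perm (Fin (n + 1)) => fmap P e σ' = l₁).card =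
      (Finset.univ.filter fun σ' : Equiv.Perm (Fin (n + 1)) => fmap P e σ' = l₂).card :=
  le_antisymm (fiber_le he h₁ h₂) (fiber_le he h₂ h₁)

end PfxAux

open PfxAux in
/-- With `T` the prefix before element `n+1` in a uniformly random permutation of `[n+1]`,
for each `i`, the random set `π^{i-1} ∩ T` has the same distribution as `prefix(σ, π(i))`
for `σ` a uniformly random ordering of `π^i` (here realized as a uniformly random list
enumerating `π^i`). -/
theorem prefix_distribution_eq {n : ℕ} (π : Equiv.Perm (Fin n)) (i : Fin n)
    (S : Finset (Fin n)) :
    ((Finset.univ.filter fun σ' : Equiv.Perm (Fin (n + 1)) =>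
          prevSet π i ∩ downSet (prefixSet σ' (Fin.last n)) = S).card : ℝ) /
        (Nat.factorial (n + 1) : ℝ) =
      (((insert (π i) (prevSet π i)).toList.permutations.toFinset.filter
          (fun l => listPrefix l (π i) = S)).card : ℝ) /
        (Nat.factorial (i.val + 1) : ℝ) := by
  classical
  have he : π i ∉ prevSet π i := by
    simp only [prevSet, Finset.mem_image, Finset.mem_filter, Finset.mem_univ, true_and]
    rintro ⟨j, hj, hje⟩
    exact absurd (π.injective hje) (ne_of_lt hj)
  set P : Finset (Fin n) := prevSet π i with hP
  set e : Fin n := π i with he'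
  set A : Finset (Fin n) := insert e P with hA
  have hPcard : P.card = i.val := by
    rw [hP, prevSet, Finset.card_image_of_injective _ π.injective,
      show (Finset.univ.filter fun j => j < i) = Finset.Iio i from by ext j; simp,
      Fin.card_Iio]
  have hAcard : A.card = i.val + 1 := by
    rw [hA, Finset.card_insert_of_notMem he, hPcard]
  have hlenA : A.toList.length = i.val + 1 := by rw [Finset.length_toList, hAcard]
  set Perms : Finset (List (Fin n)) := A.toList.permutations.toFinset with hPerms
  have hPermscard : Perms.card = (i.val + 1).factorial := by
    rw [hPerms, List.toFinset_card_of_nodup (List.nodup_permutations _ (Finset.nodup_toList _)),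
      List.length_permutations, hlenA]
  set Fib : List (Fin n) → Finset (Equiv.Perm (Fin (n + 1))) :=
    fun l => Finset.univ.filter fun σ' => fmap P e σ' = l with hFib
  set c : ℕ := (Fib A.toList).card with hc
  have hfibc : ∀ l ∈ Perms, (Fib l).card = c := by
    intro l hl
    exact fiber_card_eq he (List.mem_permutations.1 (List.mem_toFinset.1 hl)) (List.Perm.refl _)
  have hmemPerms : ∀ σ' : Equiv.Perm (Fin (n + 1)), fmap P e σ' ∈ Perms := by
    intro σ'
    exact List.mem_toFinset.2 (List.mem_permutations.2 (fmap_perm he))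
  have htotal : (n + 1).factorial = (i.val + 1).factorial * c := by
    have h1 : (Finset.univ : Finset (Equiv.Perm (Fin (n + 1)))).card =
        ∑ l ∈ Perms, (Fib l).card := by
      apply Finset.card_eq_sum_card_fiberwise
      intro σ' _
      exact hmemPerms σ'
    rw [Finset.card_univ, Fintype.card_perm, Fintype.card_fin] at h1
    rw [h1, Finset.sum_congr rfl hfibc, Finset.sum_const, hPermscard, smul_eq_mul]
  set M : Finset (List (Fin n)) := Perms.filter fun l => listPrefix l e = S with hM
  have hcount : (Finset.univ.filter fun σ' : Equiv.Perm (Fin (n + 1)) =>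
      P ∩ downSet (prefixSet σ' (Fin.last n)) = S).card = M.card * c := by
    have hfc : (Finset.univ.filter fun σ' : Equiv.Perm (Fin (n + 1)) =>
        P ∩ downSet (prefixSet σ' (Fin.last n)) = S) =
        (Finset.univ.filter fun σ' => listPrefix (fmap P e σ') e = S) := by
      apply Finset.filter_congr
      intro σ' _
      rw [cond_iff_listPrefix he σ']
    rw [hfc]
    have h2 : (Finset.univ.filter fun σ' : Equiv.Perm (Fin (n + 1)) =>
        listPrefix (fmap P e σ') e = S).card =
        ∑ l ∈ M, ((Finset.univ.filter fun σ' : Equiv.Perm (Fin (n + 1)) =>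
          listPrefix (fmap P e σ') e = S).filter fun σ' => fmap P e σ' = l).card := by
      apply Finset.card_eq_sum_card_fiberwise
      intro σ' hσ'
      rw [Finset.mem_coe, Finset.mem_filter] at hσ'
      rw [Finset.mem_coe, hM, Finset.mem_filter]
      exact ⟨hmemPerms σ', hσ'.2⟩
    rw [h2]
    have h3 : ∀ l ∈ M, ((Finset.univ.filter fun σ' : Equiv.Perm (Fin (n + 1)) =>
        listPrefix (fmap P e σ') e = S).filter fun σ' => fmap P e σ' = l).card
        = c := by
      intro l hl
      rw [hM, Finset.mem_filter] at hl
      have : ((Finset.univ.filter fun σ' : Equiv.Perm (Fin (n + 1)) =>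
          listPrefix (fmap P e σ') e = S).filter fun σ' => fmap P e σ' = l) = Fib l := by
        ext σ'
        rw [hFib]
        simp only [Finset.mem_filter, Finset.mem_univ, true_and]
        constructor
        · rintro ⟨_, h⟩; exact h
        · intro h; exact ⟨by rw [h]; exact hl.2, h⟩
      rw [this]
      exact hfibc l hl.1
    rw [Finset.sum_congr rfl h3, Finset.sum_const, smul_eq_mul]
  rw [hcount, htotal]
  have hcne : (c : ℝ) ≠ 0 := by
    have : c ≠ 0 := by
      intro h0
      rw [h0, mul_zero] at htotal
      exact Nat.factorial_ne_zero _ htotal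
    exact_mod_cast this
  push_cast
  rw [mul_comm ((i.val + 1).factorial : ℝ) (c : ℝ), mul_comm ((M.card : ℝ)) (c : ℝ),
    mul_div_mul_left _ _ hcne]
end

section
/- Fix a permutation π of [n]. Sample a uniformly random permutation σ' of [n+1] and let T = prefix(σ', n+1). Then for every i ∈ [n] and every S ⊆ {π(1),...,π(i-1)}, the conditional probability Pr[π(i) ∈ T | {π(1),...,π(i-1)} ∩ T = S] = (|S| + 1)/(i + 1). -/
section Helpers
open Finset
variable {N : ℕ}


def Ev (N : ℕ) (B C : Finset (Fin N)) (e : Fin N) : Finset (Equiv.Perm (Fin N)) :=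
  univ.filter fun σ => (∀ x ∈ B, σ.symm x < σ.symm e) ∧ (∀ x ∈ C, σ.symm e < σ.symm x)

lemma mem_Ev {B C : Finset (Fin N)} {e : Fin N} {σ : Equiv.Perm (Fin N)} :
    σ ∈ Ev N B C e ↔ (∀ x ∈ B, σ.symm x < σ.symm e) ∧ (∀ x ∈ C, σ.symm e < σ.symm x) := by
  simp [Ev]

def fwdB (B : Finset (Fin N)) {b : ℕ} (σ : Equiv.Perm (Fin N))
    (hb : ∀ x : {x // x ∈ B}, (σ.symm x.1).val < b)
    (hmem : ∀ j : Fin N, j.val < b → σ j ∈ B) : {x // x ∈ B} ≃ {j : Fin N // j.val < b} where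
  toFun x := ⟨σ.symm x.1, hb x⟩
  invFun j := ⟨σ j.1, hmem j.1 j.2⟩
  left_inv x := Subtype.ext (by simp)
  right_inv j := Subtype.ext (by simp)

def fwdC (C : Finset (Fin N)) {b : ℕ} (σ : Equiv.Perm (Fin N))
    (hc : ∀ x : {x // x ∈ C}, b < (σ.symm x.1).val)
    (hmem : ∀ j : Fin N, b < j.val → σ j ∈ C) : {x // x ∈ C} ≃ {j : Fin N // b < j.val} where
  toFun x := ⟨σ.symm x.1, hc x⟩
  invFun j := ⟨σ j.1, hmem j.1 j.2⟩
  left_inv x := Subtype.ext (by simp)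
  right_inv j := Subtype.ext (by simp)

def glue (B C : Finset (Fin N)) (e : Fin N) {b : ℕ} (hbN : b < N)
    (α : {x // x ∈ B} ≃ {j : Fin N // j.val < b})
    (β : {x // x ∈ C} ≃ {j : Fin N // b < j.val})
    (hBC : Disjoint B C) (heB : e ∉ B) (heC : e ∉ C)
    (hu : ∀ x, x ∈ B ∨ x ∈ C ∨ x = e) : Equiv.Perm (Fin N) where
  toFun j :=
    if h : j.val < b then (α.symm ⟨j, h⟩ : Fin N)
    else if h' : b < j.val then (β.symm ⟨j, h'⟩ : Fin N) else e
  invFun x :=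
    if h : x ∈ B then (α ⟨x, h⟩ : Fin N)
    else if h' : x ∈ C then (β ⟨x, h'⟩ : Fin N) else ⟨b, hbN⟩
  left_inv := by
    have hnotB : ∀ x ∈ C, x ∉ B := fun x hx hB => (Finset.disjoint_left.mp hBC hB) hx
    intro j
    by_cases h : j.val < b
    · simp only [dif_pos h]
      rw [dif_pos (α.symm ⟨j, h⟩).2, Subtype.coe_eta, Equiv.apply_symm_apply]
    · by_cases h' : b < j.val
      · simp only [dif_neg h, dif_pos h']
        rw [dif_neg (hnotB _ (β.symm ⟨j, h'⟩).2), dif_pos (β.symm ⟨j, h'⟩).2,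
          Subtype.coe_eta, Equiv.apply_symm_apply]
      · simp only [dif_neg h, dif_neg h']
        rw [dif_neg heB, dif_neg heC]
        exact Fin.ext (show b = (j : ℕ) by omega)
  right_inv := by
    have hnotB : ∀ x ∈ C, x ∉ B := fun x hx hB => (Finset.disjoint_left.mp hBC hB) hx
    intro x
    rcases hu x with hx | hx | hx
    · simp only [dif_pos hx]
      rw [dif_pos (α ⟨x, hx⟩).2, Subtype.coe_eta, Equiv.symm_apply_apply]
    · simp only [dif_neg (hnotB _ hx), dif_pos hx]
      rw [dif_neg (by have := (β ⟨x, hx⟩).2; omega : ¬ ((β ⟨x, hx⟩ : Fin N).val < b)),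
        dif_pos (β ⟨x, hx⟩).2, Subtype.coe_eta, Equiv.symm_apply_apply]
    · subst hx
      simp only [dif_neg heB, dif_neg heC]
      rw [dif_neg (lt_irrefl b), dif_neg (lt_irrefl b)]

lemma Ev_base {B C : Finset (Fin N)} {e : Fin N} (hBC : Disjoint B C) (heB : e ∉ B) (heC : e ∉ C)
    (hu : ∀ x, x ∈ B ∨ x ∈ C ∨ x = e) :
    (Ev N B C e).card = B.card.factorial * C.card.factorial := by
  classical
  set b := B.card with hbdef
  set c := C.card with hcdef
  have hN : b + c + 1 = N := by
    have hdisj : Disjoint (B ∪ C) {e} := by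
      simp [Finset.disjoint_singleton_right, heB, heC]
    have huniv : B ∪ C ∪ {e} = univ := by
      ext x
      simp only [mem_union, mem_singleton, mem_univ, iff_true]
      have := hu x; tauto
    have := Finset.card_union_of_disjoint hdisj
    rw [huniv, Finset.card_union_of_disjoint hBC, card_univ, Fintype.card_fin,
      card_singleton] at this
    omega
  have hbN : b < N := by omega
  have key : ∀ σ : Equiv.Perm (Fin N), (∀ x ∈ B, σ.symm x < σ.symm e) →
      (∀ x ∈ C, σ.symm e < σ.symm x) → σ.symm e = ⟨b, hbN⟩ := by
    intro σ h1 h2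
    have himg : univ.filter (fun x => σ.symm x < σ.symm e) = B := by
      ext x
      simp only [mem_filter, mem_univ, true_and]
      constructor
      · intro h
        rcases hu x with hx | hx | hx
        · exact hx
        · exact absurd h (asymm (h2 x hx))
        · subst hx; exact absurd h (lt_irrefl _)
      · exact h1 x
    have hiio : univ.filter (fun x => σ.symm x < σ.symm e) = (Finset.Iio (σ.symm e)).image σ := by
      ext y
      simp only [mem_filter, mem_univ, true_and, mem_image, Finset.mem_Iio]
      constructor
      · intro h
        exact ⟨σ.symm y, h, by simp⟩
      · rintro ⟨j, hj, rfl⟩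
        simpa using hj
    have : B.card = (σ.symm e).val := by
      rw [← himg, hiio, Finset.card_image_of_injective _ σ.injective, Fin.card_Iio]
    exact Fin.ext this.symm
  have hmemB : ∀ (σ : Equiv.Perm (Fin N)), (∀ x ∈ B, σ.symm x < σ.symm e) →
      (∀ x ∈ C, σ.symm e < σ.symm x) → ∀ j : Fin N, j.val < b → σ j ∈ B := by
    intro σ h1 h2 j hj
    have he := key σ h1 h2
    rcases hu (σ j) with hx | hx | hx
    · exact hx
    · have := h2 _ hx
      rw [Equiv.symm_apply_apply, he] at this
      exact absurd this (by simp [Fin.lt_def]; omega)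
    · exfalso
      have : j = σ.symm e := by rw [← hx, Equiv.symm_apply_apply]
      rw [he] at this
      subst this
      simp at hj
  have hmemC : ∀ (σ : Equiv.Perm (Fin N)), (∀ x ∈ B, σ.symm x < σ.symm e) →
      (∀ x ∈ C, σ.symm e < σ.symm x) → ∀ j : Fin N, b < j.val → σ j ∈ C := by
    intro σ h1 h2 j hj
    have he := key σ h1 h2
    rcases hu (σ j) with hx | hx | hx
    · have := h1 _ hx
      rw [Equiv.symm_apply_apply, he] at this
      exact absurd this (by simp [Fin.lt_def]; omega)
    · exact hx
    · exfalso
      have : j = σ.symm e := by rw [← hx, Equiv.symm_apply_apply]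
      rw [he] at this
      subst this
      simp at hj
  have hfb : ∀ σ : Equiv.Perm (Fin N), σ ∈ Ev N B C e →
      ∀ x : {x // x ∈ B}, (σ.symm x.1).val < b := by
    intro σ hσ x
    have h := mem_Ev.mp hσ
    have hlt := h.1 x.1 x.2
    rw [key σ h.1 h.2] at hlt
    exact hlt
  have hfc : ∀ σ : Equiv.Perm (Fin N), σ ∈ Ev N B C e →
      ∀ x : {x // x ∈ C}, b < (σ.symm x.1).val := by
    intro σ hσ x
    have h := mem_Ev.mp hσ
    have hlt := h.2 x.1 x.2
    rw [key σ h.1 h.2] at hlt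
    exact hlt
  have hcard : (Ev N B C e).card =
      (univ : Finset ((({x // x ∈ B}) ≃ ({j : Fin N // j.val < b})) ×
        (({x // x ∈ C}) ≃ ({j : Fin N // b < j.val})))).card := by
    refine Finset.card_bij'
      (fun σ hσ => (fwdB B σ (hfb σ hσ) (hmemB σ (mem_Ev.mp hσ).1 (mem_Ev.mp hσ).2),
        fwdC C σ (hfc σ hσ) (hmemC σ (mem_Ev.mp hσ).1 (mem_Ev.mp hσ).2)))
      (fun p hp => glue B C e hbN p.1 p.2 hBC heB heC hu)
      (fun σ hσ => mem_univ _) (fun p hp => ?_) (fun σ hσ => ?_) (fun p hp => ?_)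
    · -- glue p ∈ Ev
      obtain ⟨α, β⟩ := p
      rw [mem_Ev]
      constructor
      · intro x hx
        show ((glue B C e hbN α β hBC heB heC hu).symm x) < _
        simp only [glue, Equiv.coe_fn_symm_mk]
        rw [dif_pos hx, dif_neg heB, dif_neg heC]
        exact (α ⟨x, hx⟩).2
      · intro x hx
        show _ < ((glue B C e hbN α β hBC heB heC hu).symm x)
        simp only [glue, Equiv.coe_fn_symm_mk]
        rw [dif_neg (fun hB => (Finset.disjoint_left.mp hBC hB) hx), dif_pos hx,
          dif_neg heB, dif_neg heC]
        exact (β ⟨x, hx⟩).2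
    · -- glue (fwd σ) = σ
      apply Equiv.ext; intro jj
      show _ = σ jj
      simp only [glue, fwdB, fwdC, Equiv.coe_fn_mk, Equiv.coe_fn_symm_mk]
      by_cases h : jj.val < b
      · rw [dif_pos h]
      · by_cases h' : b < jj.val
        · rw [dif_neg h, dif_pos h']
        · rw [dif_neg h, dif_neg h']
          have h2 := mem_Ev.mp hσ
          have hjj : jj = σ.symm e := by
            rw [key σ h2.1 h2.2]; exact Fin.ext (show (jj:ℕ) = b by omega)
          rw [hjj, Equiv.apply_symm_apply]
    · -- fwd (glue p) = p
      obtain ⟨α, β⟩ := p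
      refine Prod.ext ?_ ?_
      · apply Equiv.ext; intro x; apply Subtype.ext
        show ((glue B C e hbN α β hBC heB heC hu).symm x.1) = (α x : Fin N)
        simp only [glue, Equiv.coe_fn_symm_mk]
        rw [dif_pos x.2, Subtype.coe_eta]
      · apply Equiv.ext; intro x; apply Subtype.ext
        show ((glue B C e hbN α β hBC heB heC hu).symm x.1) = (β x : Fin N)
        simp only [glue, Equiv.coe_fn_symm_mk]
        rw [dif_neg (fun hB => (Finset.disjoint_left.mp hBC hB) x.2), dif_pos x.2,
          Subtype.coe_eta]
  rw [hcard, card_univ, Fintype.card_prod]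
  have eL : {j : Fin N // j.val < b} ≃ Fin b :=
    ⟨fun j => ⟨j.1.1, j.2⟩, fun k => ⟨⟨k.1, by omega⟩, k.2⟩,
     fun j => Subtype.ext (Fin.ext rfl), fun k => rfl⟩
  have eR : {j : Fin N // b < j.val} ≃ Fin c :=
    ⟨fun j => ⟨j.1.1 - (b + 1), by have := j.1.2; have := j.2; omega⟩,
     fun k => ⟨⟨k.1 + b + 1, by have := k.2; omega⟩, by simp⟩,
     fun j => Subtype.ext (Fin.ext (by have := j.2; simp; omega)),
     fun k => Fin.ext (by simp)⟩
  rw [Fintype.card_equiv ((B.equivFin).trans (show Fin B.card ≃ _ from (hbdef ▸ eL.symm))),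
    Fintype.card_equiv ((C.equivFin).trans (show Fin C.card ≃ _ from (hcdef ▸ eR.symm))),
    Fintype.card_coe, Fintype.card_coe]

lemma Ev_split {B C : Finset (Fin N)} {e x : Fin N} (hxB : x ∉ B) (hxC : x ∉ C) (hxe : x ≠ e) :
    (Ev N B C e).card = (Ev N (insert x B) C e).card + (Ev N B (insert x C) e).card := by
  have hne : ∀ σ : Equiv.Perm (Fin N), σ.symm x ≠ σ.symm e :=
    fun σ h => hxe (σ.symm.injective h)
  have h1 : Ev N (insert x B) C e = (Ev N B C e).filter (fun σ => σ.symm x < σ.symm e) := by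
    ext σ
    simp only [mem_Ev, mem_filter, forall_mem_insert]
    tauto
  have h2 : Ev N B (insert x C) e = (Ev N B C e).filter (fun σ => ¬ σ.symm x < σ.symm e) := by
    ext σ
    simp only [mem_Ev, mem_filter, forall_mem_insert]
    constructor
    · rintro ⟨hB, hx, hC⟩
      exact ⟨⟨hB, hC⟩, not_lt_of_gt hx⟩
    · rintro ⟨⟨hB, hC⟩, hx⟩
      exact ⟨hB, (lt_or_gt_of_ne (hne σ)).resolve_left hx, hC⟩
  rw [h1, h2, card_filter_add_card_filter_not]

lemma card_union_three {B C : Finset (Fin N)} {e : Fin N} (hBC : Disjoint B C) (heB : e ∉ B)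
    (heC : e ∉ C) : (B ∪ C ∪ {e}).card = B.card + C.card + 1 := by
  have hdisj : Disjoint (B ∪ C) {e} := by
    simp [Finset.disjoint_singleton_right, heB, heC]
  rw [Finset.card_union_of_disjoint hdisj, Finset.card_union_of_disjoint hBC, card_singleton]

lemma Ev_core_aux : ∀ (m : ℕ), ∀ {N : ℕ} (B C : Finset (Fin N)) (e : Fin N), Disjoint B C →
    e ∉ B → e ∉ C → N = B.card + C.card + 1 + m →
    (Ev N B C e).card * (B.card + C.card + 1).factorial
      = N.factorial * (B.card.factorial * C.card.factorial) := by
  intro m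
  induction m with
  | zero =>
    intro N B C e hBC heB heC hm
    have hu : ∀ x, x ∈ B ∨ x ∈ C ∨ x = e := by
      have huniv : B ∪ C ∪ {e} = univ := by
        apply Finset.eq_univ_of_card
        rw [card_union_three hBC heB heC, Fintype.card_fin]
        omega
      intro x
      have : x ∈ B ∪ C ∪ {e} := huniv ▸ mem_univ x
      simp [or_assoc] at this; tauto
    rw [Ev_base hBC heB heC hu]
    have hfac : N.factorial = (B.card + C.card + 1).factorial := by
      exact congrArg Nat.factorial (by omega)
    rw [hfac]
    ring
  | succ m ih =>
    intro N B C e hBC heB heC hm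
    -- find an unconstrained element
    have hcompl : ((B ∪ C ∪ {e})ᶜ : Finset (Fin N)).Nonempty := by
      rw [← Finset.card_pos, Finset.card_compl, card_union_three hBC heB heC,
        Fintype.card_fin]
      omega
    obtain ⟨x, hx⟩ := hcompl
    rw [Finset.mem_compl, Finset.mem_union, Finset.mem_union, Finset.mem_singleton] at hx
    push_neg at hx
    obtain ⟨⟨hxB, hxC⟩, hxe⟩ := hx
    have h1 := ih (insert x B) C e
      (Finset.disjoint_insert_left.mpr ⟨hxC, hBC⟩)
      (by simp only [Finset.mem_insert, not_or]; exact ⟨fun h => hxe h.symm, heB⟩)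
      heC
      (by rw [Finset.card_insert_of_notMem hxB]; omega)
    have h2 := ih B (insert x C) e
      (Finset.disjoint_insert_right.mpr ⟨hxB, hBC⟩)
      heB
      (by simp only [Finset.mem_insert, not_or]; exact ⟨fun h => hxe h.symm, heC⟩)
      (by rw [Finset.card_insert_of_notMem hxC]; omega)
    rw [Finset.card_insert_of_notMem hxB] at h1
    rw [Finset.card_insert_of_notMem hxC] at h2
    rw [Ev_split hxB hxC hxe]
    set b := B.card
    set c := C.card
    have e1 : b + 1 + c + 1 = (b + c + 1) + 1 := by omega
    have e2 : b + (c + 1) + 1 = (b + c + 1) + 1 := by omega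
    rw [e1] at h1
    rw [e2] at h2
    apply Nat.eq_of_mul_eq_mul_right (show 0 < b + c + 1 + 1 by omega)
    have expand : ((Ev N (insert x B) C e).card + (Ev N B (insert x C) e).card)
          * (b + c + 1).factorial * (b + c + 1 + 1)
        = (Ev N (insert x B) C e).card * (b + c + 1 + 1).factorial
          + (Ev N B (insert x C) e).card * (b + c + 1 + 1).factorial := by
      rw [Nat.factorial_succ (b + c + 1)]
      ring
    rw [expand, h1, h2, Nat.factorial_succ b, Nat.factorial_succ c]
    ring

lemma Ev_core {N : ℕ} (B C : Finset (Fin N)) (e : Fin N) (hBC : Disjoint B C) (heB : e ∉ B)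
    (heC : e ∉ C) :
    (Ev N B C e).card * (B.card + C.card + 1).factorial
      = N.factorial * (B.card.factorial * C.card.factorial) := by
  have hle : B.card + C.card + 1 ≤ N := by
    have h1 := card_union_three hBC heB heC
    have h2 := Finset.card_le_univ (B ∪ C ∪ {e})
    rw [h1, Fintype.card_fin] at h2
    exact h2
  exact Ev_core_aux (N - (B.card + C.card + 1)) B C e hBC heB heC (by omega)

end Helpers

/-- With `T` the prefix before element `n+1` in a uniformly random permutation of `[n+1]`,
for every `i` and every `S ⊆ π^{i-1}`,
`Pr[π(i) ∈ T | π^{i-1} ∩ T = S] = (|S| + 1)/(i + 1)`. -/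
theorem conditional_membership_prob {n : ℕ} (π : Equiv.Perm (Fin n)) (i : Fin n)
    (S : Finset (Fin n)) (hS : S ⊆ prevSet π i) :
    ((Finset.univ.filter fun σ' : Equiv.Perm (Fin (n + 1)) =>
          π i ∈ downSet (prefixSet σ' (Fin.last n)) ∧
            prevSet π i ∩ downSet (prefixSet σ' (Fin.last n)) = S).card : ℝ) /
        ((Finset.univ.filter fun σ' : Equiv.Perm (Fin (n + 1)) =>
          prevSet π i ∩ downSet (prefixSet σ' (Fin.last n)) = S).card : ℝ) =
      ((S.card : ℝ) + 1) / ((i.val : ℝ) + 2) := by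
  classical
  set P := prevSet π i with hPdef
  have hPcard : P.card = i.val := by
    rw [hPdef, prevSet, Finset.card_image_of_injective _ π.injective]
    have : (Finset.univ.filter fun j => j < i) = Finset.Iio i := by
      ext j; simp
    rw [this, Fin.card_Iio]
  have hπiP : π i ∉ P := by
    rw [hPdef, prevSet]
    intro h
    obtain ⟨j, hj, hji⟩ := Finset.mem_image.mp h
    have := π.injective hji
    subst this
    exact absurd (Finset.mem_filter.mp hj).2 (lt_irrefl _)
  have hkle : S.card ≤ i.val := hPcard ▸ Finset.card_le_card hS
  set B₀ : Finset (Fin (n+1)) := S.image Fin.castSucc with hB₀def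
  set C₀ : Finset (Fin (n+1)) := (P \ S).image Fin.castSucc with hC₀def
  set xx : Fin (n+1) := (π i).castSucc with hxxdef
  have hB₀card : B₀.card = S.card := Finset.card_image_of_injective _ (Fin.castSucc_injective n)
  have hC₀card : C₀.card = i.val - S.card := by
    rw [hC₀def, Finset.card_image_of_injective _ (Fin.castSucc_injective n),
      Finset.card_sdiff_of_subset hS, hPcard]
  have hdisj : Disjoint B₀ C₀ := by
    rw [hB₀def, hC₀def, Finset.disjoint_image (Fin.castSucc_injective n)]
    exact Finset.disjoint_sdiff
  have hlastB₀ : Fin.last n ∉ B₀ := by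
    intro h
    obtain ⟨y, _, hy⟩ := Finset.mem_image.mp h
    exact (Fin.castSucc_lt_last y).ne hy
  have hlastC₀ : Fin.last n ∉ C₀ := by
    intro h
    obtain ⟨y, _, hy⟩ := Finset.mem_image.mp h
    exact (Fin.castSucc_lt_last y).ne hy
  have hxxB₀ : xx ∉ B₀ := by
    intro h
    obtain ⟨y, hy, hxy⟩ := Finset.mem_image.mp h
    have := Fin.castSucc_injective n hxy
    subst this
    exact hπiP (hS hy)
  have hxxC₀ : xx ∉ C₀ := by
    intro h
    obtain ⟨y, hy, hxy⟩ := Finset.mem_image.mp h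
    have := Fin.castSucc_injective n hxy
    subst this
    exact hπiP (Finset.mem_sdiff.mp hy).1
  have hxxlast : xx ≠ Fin.last n := (Fin.castSucc_lt_last _).ne
  have hmemD : ∀ (σ' : Equiv.Perm (Fin (n+1))) (y : Fin n),
      y ∈ downSet (prefixSet σ' (Fin.last n)) ↔
        σ'.symm y.castSucc < σ'.symm (Fin.last n) := by
    intro σ' y
    simp [downSet, prefixSet]
  have main_iff : ∀ σ' : Equiv.Perm (Fin (n+1)),
      (P ∩ downSet (prefixSet σ' (Fin.last n)) = S) ↔
        ((∀ x ∈ B₀, σ'.symm x < σ'.symm (Fin.last n)) ∧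
         (∀ x ∈ C₀, σ'.symm (Fin.last n) < σ'.symm x)) := by
    intro σ'
    constructor
    · intro h
      constructor
      · intro x hx
        obtain ⟨y, hy, rfl⟩ := Finset.mem_image.mp hx
        have hyD : y ∈ P ∩ downSet (prefixSet σ' (Fin.last n)) := h ▸ hy
        exact (hmemD σ' y).mp (Finset.mem_inter.mp hyD).2
      · intro x hx
        obtain ⟨y, hy, rfl⟩ := Finset.mem_image.mp hx
        obtain ⟨hyP, hyS⟩ := Finset.mem_sdiff.mp hy
        have hyD : y ∉ downSet (prefixSet σ' (Fin.last n)) := by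
          intro hD
          exact hyS (h ▸ Finset.mem_inter.mpr ⟨hyP, hD⟩)
        rw [hmemD σ' y] at hyD
        have hne : σ'.symm y.castSucc ≠ σ'.symm (Fin.last n) :=
          fun hh => (Fin.castSucc_lt_last y).ne (σ'.symm.injective hh)
        exact ((lt_or_gt_of_ne hne).resolve_left hyD)
    · rintro ⟨hB, hC⟩
      ext y
      rw [Finset.mem_inter]
      constructor
      · rintro ⟨hyP, hyD⟩
        by_contra hyS
        have := hC y.castSucc (Finset.mem_image_of_mem _ (Finset.mem_sdiff.mpr ⟨hyP, hyS⟩))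
        exact absurd ((hmemD σ' y).mp hyD) (asymm this)
      · intro hyS
        exact ⟨hS hyS, (hmemD σ' y).mpr (hB _ (Finset.mem_image_of_mem _ hyS))⟩
  have claim_den : (Finset.univ.filter fun σ' : Equiv.Perm (Fin (n + 1)) =>
      prevSet π i ∩ downSet (prefixSet σ' (Fin.last n)) = S) = Ev (n+1) B₀ C₀ (Fin.last n) := by
    ext σ'
    rw [Finset.mem_filter, mem_Ev]
    simp only [Finset.mem_univ, true_and]
    exact main_iff σ'
  have claim_num : (Finset.univ.filter fun σ' : Equiv.Perm (Fin (n + 1)) =>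
      π i ∈ downSet (prefixSet σ' (Fin.last n)) ∧
        prevSet π i ∩ downSet (prefixSet σ' (Fin.last n)) = S)
      = Ev (n+1) (insert xx B₀) C₀ (Fin.last n) := by
    ext σ'
    rw [Finset.mem_filter, mem_Ev]
    simp only [Finset.mem_univ, true_and, Finset.forall_mem_insert]
    rw [hmemD σ' (π i), main_iff σ']
    tauto
  have h_den := Ev_core B₀ C₀ (Fin.last n) hdisj hlastB₀ hlastC₀
  have h_num := Ev_core (insert xx B₀) C₀ (Fin.last n)
    (Finset.disjoint_insert_left.mpr ⟨hxxC₀, hdisj⟩)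
    (by simp only [Finset.mem_insert, not_or]; exact ⟨fun h => hxxlast h.symm, hlastB₀⟩)
    hlastC₀
  rw [Finset.card_insert_of_notMem hxxB₀] at h_num
  rw [hB₀card, hC₀card] at h_den h_num
  set den := (Ev (n+1) B₀ C₀ (Fin.last n)).card with hden
  set num := (Ev (n+1) (insert xx B₀) C₀ (Fin.last n)).card with hnum
  set k := S.card with hk
  set c := i.val - S.card with hc
  have e_den : k + c + 1 = i.val + 1 := by omega
  have e_num : k + 1 + c + 1 = (i.val + 1) + 1 := by omega
  rw [e_den] at h_den
  rw [e_num] at h_num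
  have hkey : num * (i.val + 2) = (k + 1) * den := by
    apply Nat.eq_of_mul_eq_mul_right (Nat.factorial_pos (i.val + 1))
    calc num * (i.val + 2) * (i.val + 1).factorial
        = num * ((i.val + 1) + 1).factorial := by
          rw [Nat.factorial_succ (i.val + 1)]; ring
      _ = (n+1).factorial * ((k+1).factorial * c.factorial) := h_num
      _ = (k + 1) * ((n+1).factorial * (k.factorial * c.factorial)) := by
          rw [Nat.factorial_succ k]; ring
      _ = (k + 1) * (den * (i.val + 1).factorial) := by rw [h_den]
      _ = (k + 1) * den * (i.val + 1).factorial := by ring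
  have hden_pos : 0 < den := by
    by_contra h
    have hz : den = 0 := by omega
    rw [hz, zero_mul] at h_den
    exact absurd h_den.symm (Nat.mul_ne_zero (Nat.factorial_ne_zero _)
      (Nat.mul_ne_zero (Nat.factorial_ne_zero _) (Nat.factorial_ne_zero _)))
  rw [claim_num, claim_den, ← hden, ← hnum]
  rw [div_eq_div_iff (by exact_mod_cast hden_pos.ne') (by positivity)]
  push_cast
  have hcast := congrArg (Nat.cast : ℕ → ℝ) hkey
  push_cast at hcast
  linarith
end

section
/- Let M = {∅, {1}, {2}, ..., {n}} be the 1-uniform matroid on [n] with n = 1/α an integer, for α ∈ (0, 1/2]. Fix j ∈ [n] and δ ∈ (0, 1/(n + 1/α − 2)], and let D_A be the distribution with Pr[A = ∅] = 1 − δ(n + 1/α − 2), Pr[A = [n]] = δ(1/α − 1), and Pr[A = {i}] = δ for each i ≠ j. Then D_A is α-uncontentious for M. -/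
/-- For the 1-uniform matroid on `[n]` with `n = 1/α`, the correlated distribution of
Example `p_min` (mass `1 − δ(n + 1/α − 2)` on `∅`, `δ(1/α − 1)` on `[n]`, and `δ` on each
singleton `{i}` with `i ≠ j`) is `α`-uncontentious. -/
theorem example_pmin_uncontentious {n : ℕ} (α δ : ℝ)
    (hα : α ∈ Set.Ioc (0 : ℝ) (1 / 2)) (hn : (n : ℝ) = 1 / α) (j : Fin n)
    (hδ : δ ∈ Set.Ioc (0 : ℝ) (1 / ((n : ℝ) + 1 / α - 2)))
    (D : Finset (Fin n) → ℝ)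
    (hD0 : D ∅ = 1 - δ * ((n : ℝ) + 1 / α - 2))
    (hDu : D Finset.univ = δ * (1 / α - 1))
    (hDs : ∀ i : Fin n, i ≠ j → D {i} = δ)
    (hDo : ∀ A : Finset (Fin n), A ≠ ∅ → A ≠ Finset.univ →
      (¬ ∃ i : Fin n, i ≠ j ∧ A = {i}) → D A = 0) :
    Uncontentious α
      (insert (∅ : Finset (Fin n)) (Finset.univ.image fun i : Fin n => ({i} : Finset (Fin n))))
      D := by
  obtain ⟨hα0, hα2⟩ := hα
  obtain ⟨hδ0, hδ1⟩ := hδ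
  have hα1 : α ≤ 1 := le_trans hα2 (by norm_num)
  have hn2R : (2:ℝ) ≤ (n:ℝ) := by
    rw [hn, le_div_iff₀ hα0]; linarith
  have hn2 : 2 ≤ n := by exact_mod_cast hn2R
  have hia : (1:ℝ) ≤ 1/α - 1 := by
    have : (2:ℝ) ≤ 1/α := by rw [le_div_iff₀ hα0]; linarith
    linarith
  have hDu0 : 0 < D Finset.univ := by rw [hDu]; nlinarith
  set f : Finset (Fin n) → Finset (Fin n) :=
    fun A => if A = Finset.univ then {j} else if A.card = 1 then A else ∅ with hf
  have hfM : ∀ A, f A ⊆ A ∧ f A ∈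
      insert (∅ : Finset (Fin n)) (Finset.univ.image fun i : Fin n => ({i} : Finset (Fin n))) := by
    intro A
    simp only [hf]
    split_ifs with h1 h2
    · subst h1
      exact ⟨Finset.subset_univ _, by simp⟩
    · obtain ⟨k, hk⟩ := Finset.card_eq_one.mp h2
      subst hk
      exact ⟨subset_rfl, by simp⟩
    · exact ⟨Finset.empty_subset _, by simp⟩
  have huniv_ne : ∀ i : Fin n, Finset.univ ≠ ({i} : Finset (Fin n)) := by
    intro i h
    have := congrArg Finset.card h
    simp at this
    omega
  refine ⟨fun φ => if φ = f then 1 else 0, ⟨?_, ?_, ?_⟩, ?_⟩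
  · intro φ; dsimp only; split_ifs <;> norm_num
  · rw [Finset.sum_ite_eq' Finset.univ f (fun _ => (1:ℝ))]; simp
  · intro φ hφ A
    have hφf : φ = f := by by_contra h; simp [h] at hφ
    subst hφf; exact hfM A
  · intro i hi
    have hsel : selProb D (fun φ => if φ = f then 1 else 0) i
        = ∑ A : Finset (Fin n), if i ∈ f A ∧ i ∈ A then D A else 0 := by
      unfold selProb
      refine Finset.sum_congr rfl fun A _ => ?_
      have hterm : ∀ φ : Finset (Fin n) → Finset (Fin n),
          (if i ∈ φ A ∧ i ∈ A then D A * (if φ = f then (1:ℝ) else 0) else 0)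
          = if φ = f then (if i ∈ f A ∧ i ∈ A then D A else 0) else 0 := by
        intro φ
        by_cases h : φ = f
        · subst h; split_ifs <;> simp
        · simp only [h, if_false, mul_zero]; split_ifs <;> rfl
      rw [Finset.sum_congr rfl fun φ _ => hterm φ,
        Finset.sum_ite_eq' Finset.univ f (fun _ => if i ∈ f A ∧ i ∈ A then D A else 0)]
      simp
    by_cases hij : i = j
    · subst hij
      have heq : selProb D (fun φ => if φ = f then 1 else 0) i = prElem D i := by
        rw [hsel]; unfold prElem
        refine Finset.sum_congr rfl fun A _ => ?_
        by_cases hiA : i ∈ A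
        · by_cases hA1 : A = Finset.univ
          · subst hA1; simp [hf]
          · by_cases hA2 : A.card = 1
            · obtain ⟨k, hk⟩ := Finset.card_eq_one.mp hA2
              subst hk
              simp only [Finset.mem_singleton] at hiA
              subst hiA
              simp [hf, (huniv_ne i).symm]
            · have hD0' : D A = 0 := by
                apply hDo A (Finset.ne_empty_of_mem hiA) hA1
                rintro ⟨k, _, rfl⟩; simp at hA2
              simp [hD0', hf, hA1, hA2, hiA]
        · simp [hiA]
      rw [heq, div_self (ne_of_gt hi)]
      exact hα1
    · have hsi : ({i} : Finset (Fin n)) ≠ Finset.univ := (huniv_ne i).symm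
      have hsel2 : selProb D (fun φ => if φ = f then 1 else 0) i = δ := by
        rw [hsel]
        have hterm : ∀ A : Finset (Fin n), (if i ∈ f A ∧ i ∈ A then D A else 0)
            = if A = ({i} : Finset (Fin n)) then δ else 0 := by
          intro A
          by_cases hA : A = ({i} : Finset (Fin n))
          · subst hA
            simp [hf, hsi, hDs i hij]
          · by_cases hA1 : A = Finset.univ
            · subst hA1
              simp [hf, hij, hA]
            · by_cases hA2 : A.card = 1
              · obtain ⟨k, hk⟩ := Finset.card_eq_one.mp hA2
                subst hk
                have hik : i ∉ ({k} : Finset (Fin n)) := by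
                  simp only [Finset.mem_singleton]
                  rintro rfl; exact hA rfl
                simp [hf, hA1, hik, hA]
              · simp [hf, hA1, hA2, hA]
        rw [Finset.sum_congr rfl fun A _ => hterm A,
          Finset.sum_ite_eq' Finset.univ ({i} : Finset (Fin n)) (fun _ => δ)]
        simp
      have hpr : prElem D i = δ / α := by
        unfold prElem
        have hterm : ∀ A : Finset (Fin n), (if i ∈ A then D A else 0)
            = (if A = Finset.univ then D Finset.univ else 0)
              + (if A = ({i} : Finset (Fin n)) then δ else 0) := by
          intro A
          by_cases hA1 : A = Finset.univ
          · subst hA1; simp [huniv_ne i]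
          · by_cases hA : A = ({i} : Finset (Fin n))
            · subst hA; simp [hA1, hDs i hij]
            · by_cases hiA : i ∈ A
              · have hD0' : D A = 0 := by
                  apply hDo A (Finset.ne_empty_of_mem hiA) hA1
                  rintro ⟨k, hkj, rfl⟩
                  simp only [Finset.mem_singleton] at hiA
                  subst hiA; exact hA rfl
                simp [hD0', hA1, hA, hiA]
              · simp [hiA, hA1, hA]
        rw [Finset.sum_congr rfl fun A _ => hterm A, Finset.sum_add_distrib,
          Finset.sum_ite_eq' Finset.univ Finset.univ (fun _ => D Finset.univ),
          Finset.sum_ite_eq' Finset.univ ({i} : Finset (Fin n)) (fun _ => δ)]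
        simp only [Finset.mem_univ, if_true, hDu]
        field_simp
        ring
      rw [hsel2, hpr]
      have : δ / (δ / α) = α := by
        field_simp
      rw [this]
end

section
/- Consider the k-uniform matroid on [n] where all n elements are always active, processed in the order 1, 2, ..., n. Sample T as the prefix before element n+1 in a uniformly random permutation of [n+1], and greedily select element i if i ∈ T and fewer than k elements have been selected so far. Then the probability that element n is selected equals k(k+1)/(2n(n+1)). -/
/-- Greedy selection with capacity `k`: process `1, 2, …, n` in order, selecting each
element of `T` as long as fewer than `k` elements have been selected. -/
def selGreedy {n : ℕ} (k : ℕ) (T : Finset (Fin n)) : Finset (Fin n) :=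
  (List.finRange n).foldl (fun X i => if i ∈ T ∧ X.card < k then insert i X else X) ∅

open Finset

lemma aux_foldl_mem {n k : ℕ} (T : Finset (Fin n)) (l : List (Fin n)) (s : Finset (Fin n))
    (x : Fin n) (hx : x ∈ l.foldl (fun X i => if i ∈ T ∧ X.card < k then insert i X else X) s) :
    x ∈ s ∨ x ∈ l := by
  induction l generalizing s with
  | nil => exact Or.inl hx
  | cons a l ih =>
    simp only [List.foldl_cons] at hx
    rcases ih _ hx with h | h
    · split at h
      · rcases Finset.mem_insert.mp h with rfl | h
        · exact Or.inr (by simp)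
        · exact Or.inl h
      · exact Or.inl h
    · exact Or.inr (List.mem_cons_of_mem _ h)

lemma aux_foldl_card {n k : ℕ} (T : Finset (Fin n)) (l : List (Fin n)) (hl : l.Nodup)
    (s : Finset (Fin n)) (hs : s.card ≤ k) (hd : ∀ x ∈ l, x ∉ s) :
    (l.foldl (fun X i => if i ∈ T ∧ X.card < k then insert i X else X) s).card
      = min (s.card + l.countP (· ∈ T)) k := by
  induction l generalizing s with
  | nil => simp [Nat.min_eq_left hs]
  | cons a l ih =>
    have hnd := List.nodup_cons.mp hl
    simp only [List.foldl_cons, List.countP_cons]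
    by_cases haT : a ∈ T
    · by_cases hcard : s.card < k
      · rw [if_pos ⟨haT, hcard⟩]
        have hins : a ∉ s := hd a (by simp)
        rw [ih hnd.2 (insert a s) (by rw [Finset.card_insert_of_notMem hins]; omega)
          (fun x hx => by
            simp only [Finset.mem_insert, not_or]
            exact ⟨fun h => hnd.1 (h ▸ hx), hd x (List.mem_cons_of_mem _ hx)⟩)]
        rw [Finset.card_insert_of_notMem hins]
        simp [haT]
        omega
      · rw [if_neg (by tauto)]
        rw [ih hnd.2 s hs (fun x hx => hd x (List.mem_cons_of_mem _ hx))]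
        simp [haT]
        omega
    · rw [if_neg (by tauto)]
      rw [ih hnd.2 s hs (fun x hx => hd x (List.mem_cons_of_mem _ hx))]
      simp [haT]

lemma countP_finRange {m : ℕ} (p : Fin m → Prop) [DecidablePred p] :
    (List.finRange m).countP (fun x => p x) = (Finset.univ.filter p).card := by
  rw [Fin.univ_def]
  simp [Finset.filter, Finset.card, Multiset.countP_eq_card_filter]
  exact List.countP_eq_length_filter

lemma mem_selGreedy_last {m k : ℕ} (T : Finset (Fin (m + 1))) :
    Fin.last m ∈ selGreedy k T ↔
      Fin.last m ∈ T ∧ (Finset.univ.filter fun x : Fin m => x.castSucc ∈ T).card < k := by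
  unfold selGreedy
  rw [List.finRange_succ_last, List.foldl_append]
  simp only [List.foldl_cons, List.foldl_nil]
  set S : Finset (Fin (m + 1)) := ((List.finRange m).map Fin.castSucc).foldl
    (fun X i => if i ∈ T ∧ X.card < k then insert i X else X) ∅ with hS
  have hlast : Fin.last m ∉ S := by
    intro h
    rcases aux_foldl_mem T _ _ _ h with h | h
    · simp at h
    · obtain ⟨x, -, hx⟩ := List.mem_map.mp h
      have := congrArg Fin.val hx
      simp [Fin.last] at this
      omega
  have hcard : S.card = min (((List.finRange m)).countP (fun x => x.castSucc ∈ T)) k := by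
    rw [hS, aux_foldl_card T _ ((List.nodup_finRange m).map (Fin.castSucc_injective _))
      ∅ (by simp) (by simp)]
    rw [List.countP_map]
    simp only [Finset.card_empty, Nat.zero_add]
    rfl
  have hkey : (S.card < k) ↔ ((Finset.univ.filter fun x : Fin m => x.castSucc ∈ T).card < k) := by
    rw [hcard, countP_finRange (fun x : Fin m => x.castSucc ∈ T)]
    omega
  by_cases hc : Fin.last m ∈ T ∧ S.card < k
  · rw [if_pos hc]
    constructor
    · intro _; exact ⟨hc.1, hkey.mp hc.2⟩
    · intro _; exact Finset.mem_insert_self _ _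
  · rw [if_neg hc]
    constructor
    · intro h; exact absurd h hlast
    · rintro ⟨h1, h2⟩; exact absurd ⟨h1, hkey.mpr h2⟩ hc

lemma card_lt_pos {m : ℕ} (σ' : Equiv.Perm (Fin (m + 2))) (p : Fin (m + 2)) :
    (Finset.univ.filter fun y : Fin (m + 2) => σ'.symm y < p).card = p.val := by
  have heq : (Finset.univ.filter fun y : Fin (m + 2) => σ'.symm y < p)
      = (Finset.Iio p).image σ' := by
    ext y
    simp only [Finset.mem_filter, Finset.mem_univ, true_and, Finset.mem_image, Finset.mem_Iio]
    constructor
    · intro h; exact ⟨σ'.symm y, h, by simp⟩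
    · rintro ⟨z, hz, rfl⟩; simpa using hz
  rw [heq, Finset.card_image_of_injective _ σ'.injective, Fin.card_Iio]

lemma key_iff {m k : ℕ} (σ' : Equiv.Perm (Fin (m + 2))) :
    Fin.last m ∈ selGreedy k (downSet (prefixSet σ' (Fin.last (m + 1)))) ↔
      (σ'.symm ((Fin.last m).castSucc) < σ'.symm (Fin.last (m + 1)) ∧
        (σ'.symm (Fin.last (m + 1))).val ≤ k) := by
  rw [mem_selGreedy_last]
  set p := σ'.symm (Fin.last (m + 1)) with hp
  have hmem : (Fin.last m ∈ downSet (prefixSet σ' (Fin.last (m + 1)))) ↔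
      σ'.symm ((Fin.last m).castSucc) < p := by
    rw [hp]
    constructor
    · intro h
      exact (Finset.mem_filter.mp (Finset.mem_filter.mp h).2).2
    · intro h
      exact Finset.mem_filter.mpr ⟨Finset.mem_univ _,
        Finset.mem_filter.mpr ⟨Finset.mem_univ _, h⟩⟩
  have hfilter : σ'.symm ((Fin.last m).castSucc) < p →
      (Finset.univ.filter fun x : Fin m =>
        x.castSucc ∈ downSet (prefixSet σ' (Fin.last (m + 1)))).card = p.val - 1 := by
    intro h
    set a : Fin (m + 2) := (Fin.last m).castSucc with ha
    set A := Finset.univ.filter fun y : Fin (m + 2) => σ'.symm y < p with hA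
    have haA : a ∈ A := by simp [hA, h]
    have hcardA : A.card = p.val := card_lt_pos σ' p
    have hbij : (Finset.univ.filter fun x : Fin m =>
        x.castSucc ∈ downSet (prefixSet σ' (Fin.last (m + 1)))).card = (A.erase a).card := by
      apply Finset.card_bij (fun x _ => x.castSucc.castSucc)
      · intro x hx
        simp only [Finset.mem_filter, Finset.mem_univ, true_and, downSet, prefixSet] at hx
        rw [Finset.mem_erase]
        constructor
        · intro hcontra
          have := congrArg Fin.val hcontra
          simp [ha, Fin.last] at this
          omega
        · simp only [hA, Finset.mem_filter, Finset.mem_univ, true_and]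
          exact hx
      · intro x1 _ x2 _ hx
        have := congrArg Fin.val hx
        simp at this
        exact Fin.ext this
      · intro y hy
        rw [Finset.mem_erase] at hy
        obtain ⟨hya, hyA⟩ := hy
        simp only [hA, Finset.mem_filter, Finset.mem_univ, true_and] at hyA
        have hyb : y ≠ Fin.last (m + 1) := by
          intro hcontra
          rw [hcontra, ← hp] at hyA
          exact lt_irrefl _ hyA
        have hyval : y.val < m := by
          have h1 : y.val < m + 2 := y.isLt
          have h2 : y.val ≠ m := fun hc => hya (Fin.ext (by simp [ha, Fin.last, hc]))
          have h3 : y.val ≠ m + 1 := fun hc => hyb (Fin.ext (by simp [Fin.last, hc]))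
          omega
        refine ⟨⟨y.val, hyval⟩, ?_, ?_⟩
        · refine Finset.mem_filter.mpr ⟨Finset.mem_univ _, ?_⟩
          refine Finset.mem_filter.mpr ⟨Finset.mem_univ _, ?_⟩
          refine Finset.mem_filter.mpr ⟨Finset.mem_univ _, ?_⟩
          have hyy : ((⟨y.val, hyval⟩ : Fin m)).castSucc.castSucc = y := Fin.ext (by simp)
          rw [hyy, ← hp]
          exact hyA
        · exact Fin.ext (by simp)
    rw [hbij, Finset.card_erase_of_mem haA, hcardA]
  constructor
  · rintro ⟨h1, h2⟩
    have h1' := hmem.mp h1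
    refine ⟨h1', ?_⟩
    rw [hfilter h1'] at h2
    have : 0 < p.val := lt_of_le_of_lt (Nat.zero_le _) h1'
    omega
  · rintro ⟨h1, h2⟩
    refine ⟨hmem.mpr h1, ?_⟩
    rw [hfilter h1]
    omega

lemma fiber_eq {N : ℕ} (a b : Fin N) (u v u' v' : Fin N) (huv : u ≠ v) (huv' : u' ≠ v') :
    (Finset.univ.filter fun τ : Equiv.Perm (Fin N) => τ a = u ∧ τ b = v).card =
      (Finset.univ.filter fun τ : Equiv.Perm (Fin N) => τ a = u' ∧ τ b = v').card := by
  set g : Equiv.Perm (Fin N) := (Equiv.swap ((Equiv.swap u u') v) v') * (Equiv.swap u u') with hg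
  have hne1 : u' ≠ (Equiv.swap u u') v := by
    intro h
    have := congrArg (Equiv.swap u u') h
    rw [Equiv.swap_apply_right, Equiv.swap_apply_self] at this
    exact huv this
  have hgu : g u = u' := by
    simp only [hg, Equiv.Perm.mul_apply, Equiv.swap_apply_left]
    exact Equiv.swap_apply_of_ne_of_ne hne1 huv'
  have hgv : g v = v' := by
    simp only [hg, Equiv.Perm.mul_apply]
    exact Equiv.swap_apply_left _ _
  apply Finset.card_bij' (fun τ _ => g * τ) (fun τ _ => g⁻¹ * τ)
  · intro τ hτ
    simp only [Finset.mem_filter, Finset.mem_univ, true_and] at hτ ⊢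
    simp [Equiv.Perm.mul_apply, hτ.1, hτ.2, hgu, hgv]
  · intro τ hτ
    simp only [Finset.mem_filter, Finset.mem_univ, true_and] at hτ ⊢
    constructor
    · simp only [Equiv.Perm.mul_apply, hτ.1]
      rw [← hgu]; simp
    · simp only [Equiv.Perm.mul_apply, hτ.2]
      rw [← hgv]; simp
  · intro τ _; simp [mul_assoc]
  · intro τ _; simp [mul_assoc]

lemma fiber_card {m : ℕ} (a b u v : Fin (m + 2)) (hab : a ≠ b) (huv : u ≠ v) :
    (Finset.univ.filter fun τ : Equiv.Perm (Fin (m + 2)) => τ a = u ∧ τ b = v).card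
      = m.factorial := by
  have htotal : (Finset.univ : Finset (Equiv.Perm (Fin (m + 2)))).card =
      ∑ uv ∈ (Finset.univ : Finset (Fin (m + 2))).offDiag,
        (Finset.univ.filter fun τ : Equiv.Perm (Fin (m + 2)) => (τ a, τ b) = uv).card :=
    Finset.card_eq_sum_card_fiberwise (fun τ _ => by
      simp only [Finset.mem_coe, Finset.mem_offDiag, Finset.mem_univ, true_and]
      exact fun h => hab (τ.injective h))
  have hconst : ∀ uv ∈ (Finset.univ : Finset (Fin (m + 2))).offDiag,
      (Finset.univ.filter fun τ : Equiv.Perm (Fin (m + 2)) => (τ a, τ b) = uv).card =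
      (Finset.univ.filter fun τ : Equiv.Perm (Fin (m + 2)) => τ a = u ∧ τ b = v).card := by
    rintro ⟨u', v'⟩ h
    simp only [Finset.mem_offDiag, Finset.mem_univ, true_and] at h
    rw [show (Finset.univ.filter fun τ : Equiv.Perm (Fin (m + 2)) => (τ a, τ b) = (u', v'))
        = Finset.univ.filter fun τ : Equiv.Perm (Fin (m + 2)) => τ a = u' ∧ τ b = v' from
      Finset.filter_congr fun τ _ => by simp [Prod.ext_iff]]
    exact fiber_eq a b u' v' u v h huv
  rw [Finset.sum_congr rfl hconst, Finset.sum_const, smul_eq_mul] at htotal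
  have h1 : (Finset.univ : Finset (Equiv.Perm (Fin (m + 2)))).card = (m + 2).factorial := by
    rw [Finset.card_univ, Fintype.card_perm, Fintype.card_fin]
  have h2 : (Finset.univ : Finset (Fin (m + 2))).offDiag.card = (m + 2) * (m + 1) := by
    rw [Finset.offDiag_card, Finset.card_univ, Fintype.card_fin]
    have : (m + 2) * (m + 2) = (m + 2) * (m + 1) + (m + 2) := by ring
    omega
  rw [h1, h2] at htotal
  have h3 : (m + 2).factorial = (m + 2) * (m + 1) * m.factorial := by
    rw [Nat.factorial_succ, Nat.factorial_succ]; ring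
  rw [h3] at htotal
  exact (Nat.eq_of_mul_eq_mul_left (by positivity) htotal).symm

lemma main_count {m k : ℕ} (hk : k + 1 ≤ m + 1) :
    (Finset.univ.filter fun σ' : Equiv.Perm (Fin (m + 2)) =>
      σ'.symm ((Fin.last m).castSucc) < σ'.symm (Fin.last (m + 1)) ∧
      (σ'.symm (Fin.last (m + 1))).val ≤ k).card * 2 = k * (k + 1) * m.factorial := by
  set a : Fin (m + 2) := (Fin.last m).castSucc with ha
  set b : Fin (m + 2) := Fin.last (m + 1) with hb
  have hab : a ≠ b := by
    intro h
    have := congrArg Fin.val h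
    simp [ha, hb, Fin.last] at this
  have hswitch : (Finset.univ.filter fun σ' : Equiv.Perm (Fin (m + 2)) =>
        σ'.symm a < σ'.symm b ∧ (σ'.symm b).val ≤ k).card
      = (Finset.univ.filter fun τ : Equiv.Perm (Fin (m + 2)) =>
        τ a < τ b ∧ (τ b).val ≤ k).card := by
    apply Finset.card_bij' (fun σ _ => σ.symm) (fun τ _ => τ.symm) <;> simp
  rw [hswitch]
  set t := (Finset.univ ×ˢ Finset.univ : Finset (Fin (m + 2) × Fin (m + 2))).filter
    (fun uv => uv.1 < uv.2 ∧ uv.2.val ≤ k) with ht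
  have hfib := Finset.card_eq_sum_card_fiberwise
    (f := fun τ : Equiv.Perm (Fin (m + 2)) => (τ a, τ b))
    (s := Finset.univ.filter fun τ : Equiv.Perm (Fin (m + 2)) => τ a < τ b ∧ (τ b).val ≤ k)
    (t := t)
    (fun τ hτ => by
      simp only [Finset.mem_coe, Finset.mem_filter, Finset.mem_univ, true_and, ht, Finset.mem_product,
        and_self] at hτ ⊢
      exact hτ)
  have hfibcard : ∀ uv ∈ t,
      ((Finset.univ.filter fun τ : Equiv.Perm (Fin (m + 2)) =>
        τ a < τ b ∧ (τ b).val ≤ k).filter (fun τ => (τ a, τ b) = uv)).card = m.factorial := by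
    rintro ⟨u, v⟩ huv
    simp only [ht, Finset.mem_filter, Finset.mem_product, Finset.mem_univ, true_and] at huv
    rw [show ((Finset.univ.filter fun τ : Equiv.Perm (Fin (m + 2)) =>
          τ a < τ b ∧ (τ b).val ≤ k).filter (fun τ => (τ a, τ b) = (u, v)))
        = Finset.univ.filter (fun τ : Equiv.Perm (Fin (m + 2)) => τ a = u ∧ τ b = v) from ?_]
    · exact fiber_card a b u v hab (ne_of_lt huv.1)
    · ext τ
      simp only [Finset.mem_filter, Finset.mem_univ, true_and, Prod.mk.injEq]
      constructor
      · rintro ⟨-, h3, h4⟩; exact ⟨h3, h4⟩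
      · rintro ⟨h3, h4⟩
        refine ⟨⟨?_, ?_⟩, h3, h4⟩
        · rw [h3, h4]; exact huv.1
        · rw [h4]; exact huv.2
  rw [Finset.sum_congr rfl hfibcard, Finset.sum_const, smul_eq_mul] at hfib
  have htc : t.card * 2 = k * (k + 1) := by
    rw [ht, Finset.card_filter, Finset.sum_product]
    rw [Finset.sum_comm]
    dsimp only
    have step : ∀ v : Fin (m + 2),
        (∑ u : Fin (m + 2), if u < v ∧ v.val ≤ k then 1 else 0) =
          if v.val ≤ k then v.val else 0 := by
      intro v
      by_cases hv : v.val ≤ k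
      · simp only [hv, and_true, if_true]
        rw [← Finset.card_filter]
        rw [show Finset.univ.filter (fun u : Fin (m + 2) => u < v) = Finset.Iio v from by
          ext u; simp]
        exact Fin.card_Iio v
      · simp [hv]
    rw [Finset.sum_congr rfl (fun v _ => step v)]
    rw [Fin.sum_univ_eq_sum_range (fun j => if j ≤ k then j else 0) (m + 2)]
    rw [← Finset.sum_subset (Finset.range_subset_range.mpr (by omega : k + 1 ≤ m + 2))
      (fun x _ hx => by simp only [Finset.mem_range] at hx; rw [if_neg (by omega)])]
    rw [Finset.sum_congr rfl (fun j hj => by simp only [Finset.mem_range] at hj; rw [if_pos (by omega)])]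
    rw [Finset.sum_range_id_mul_two, Nat.add_sub_cancel, Nat.mul_comm]
  rw [hfib, mul_right_comm, htc]

/-- In the `k`-uniform matroid with all elements always active, processed in the natural
order with `T` the prefix before `n+1` in a uniformly random permutation of `[n+1]`, the
last element `n` is selected with probability exactly `k(k+1)/(2n(n+1))`. -/
theorem last_element_selection_prob {n k : ℕ} (hn : 0 < n) (hk1 : 1 ≤ k)
    (hk2 : k ≤ n - 1) :
    ((Finset.univ.filter fun σ' : Equiv.Perm (Fin (n + 1)) =>
        (⟨n - 1, Nat.sub_lt hn Nat.one_pos⟩ : Fin n) ∈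
          selGreedy k (downSet (prefixSet σ' (Fin.last n)))).card : ℝ) /
        (Nat.factorial (n + 1) : ℝ) =
      ((k : ℝ) * ((k : ℝ) + 1)) / (2 * (n : ℝ) * ((n : ℝ) + 1)) := by
  obtain ⟨m, rfl⟩ : ∃ m, n = m + 1 := ⟨n - 1, by omega⟩
  have hkm : k ≤ m := by omega
  have helt : (⟨m + 1 - 1, Nat.sub_lt hn Nat.one_pos⟩ : Fin (m + 1)) = Fin.last m := by
    exact Fin.ext (by simp)
  have hfe : (Finset.univ.filter fun σ' : Equiv.Perm (Fin (m + 1 + 1)) =>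
        (⟨m + 1 - 1, Nat.sub_lt hn Nat.one_pos⟩ : Fin (m + 1)) ∈
          selGreedy k (downSet (prefixSet σ' (Fin.last (m + 1)))))
      = Finset.univ.filter fun σ' : Equiv.Perm (Fin (m + 2)) =>
        σ'.symm ((Fin.last m).castSucc) < σ'.symm (Fin.last (m + 1)) ∧
        (σ'.symm (Fin.last (m + 1))).val ≤ k := by
    apply Finset.filter_congr
    intro σ' _
    rw [helt]
    exact key_iff σ'
  rw [hfe]
  have hcount := main_count (m := m) (k := k) (by omega)
  set C := (Finset.univ.filter fun σ' : Equiv.Perm (Fin (m + 2)) =>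
        σ'.symm ((Fin.last m).castSucc) < σ'.symm (Fin.last (m + 1)) ∧
        (σ'.symm (Fin.last (m + 1))).val ≤ k).card with hC
  have hfact : ((m + 1 + 1).factorial : ℝ) = (m + 2) * (m + 1) * (m.factorial : ℝ) := by
    rw [Nat.factorial_succ, Nat.factorial_succ]
    push_cast
    ring
  have hcast : (C : ℝ) * 2 = (k : ℝ) * ((k : ℝ) + 1) * (m.factorial : ℝ) := by
    exact_mod_cast congrArg (fun x : ℕ => (x : ℝ)) hcount
  have hmf : (0 : ℝ) < (m.factorial : ℝ) := by positivity
  rw [hfact]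
  push_cast
  rw [div_eq_div_iff (by positivity) (by positivity)]
  nlinarith [hcast, hmf]
end

section
/- Let M = {∅, {1}, {2}} be the matroid on two elements whose only independent sets are the empty set and the two singletons, and let D_A be the distribution with Pr[A = {1,2}] = 1/2 and Pr[A = ∅] = 1/2. Then D_A is (1/2)-uncontentious for M, yet for each i ∈ {1,2}, Pr_{A∼D_A}[i ∈ span_M(A \ {i}) | i ∈ A] = 1. -/
section AuxTwoElem

private lemma sum_ite_two {α : Type*} [Fintype α] [DecidableEq α] {a b : α} (h : a ≠ b)
    (x y : ℝ) : ∑ t : α, (if t = a then x else if t = b then y else 0) = x + y := by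
  have hpt : ∀ t : α, (if t = a then x else if t = b then y else 0)
      = (if t = a then x else 0) + (if t = b then y else 0) := by
    intro t
    by_cases h1 : t = a <;> by_cases h2 : t = b <;> simp_all
  simp only [hpt, Finset.sum_add_distrib, Finset.sum_ite_eq', Finset.mem_univ, if_true]

private def fsel (k : Fin 2) : Finset (Fin 2) → Finset (Fin 2) :=
  fun A => A.filter (fun j => j = k)

private lemma fsel_ne : fsel 0 ≠ fsel 1 := by
  intro h
  have := congrFun h Finset.univ
  revert this
  decide

private noncomputable def Cex : (Finset (Fin 2) → Finset (Fin 2)) → ℝ :=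
  fun φ => if φ = fsel 0 then (1 : ℝ) / 2 else if φ = fsel 1 then 1 / 2 else 0

private lemma prElem_eval (i : Fin 2) :
    prElem (fun A => if A = Finset.univ then (1 : ℝ) / 2 else if A = ∅ then 1 / 2 else 0) i
      = 1 / 2 := by
  unfold prElem
  have hpt : ∀ A : Finset (Fin 2),
      (if i ∈ A then
        (if A = Finset.univ then (1 : ℝ) / 2 else if A = ∅ then 1 / 2 else 0) else 0)
      = (if A = Finset.univ then (1 : ℝ) / 2 else if A = ∅ then 0 else 0) := by
    intro A
    by_cases h1 : A = Finset.univ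
    · simp [h1]
    · by_cases h2 : A = ∅
      · simp [h2, (by decide : (∅ : Finset (Fin 2)) ≠ Finset.univ)]
      · simp [h1, h2]
  rw [Finset.sum_congr rfl (fun A _ => hpt A), sum_ite_two (by decide) ((1 : ℝ)/2) 0]
  norm_num

end AuxTwoElem

/-- For the matroid `{∅, {1}, {2}}` on two elements with `Pr[A = {1,2}] = Pr[A = ∅] = 1/2`:
the distribution is `(1/2)`-uncontentious, yet each element is spanned by the rest of the
active set with conditional probability `1`. -/
theorem two_element_example :
    Uncontentious (1 / 2) ({∅, {0}, {1}} : Finset (Finset (Fin 2)))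
      (fun A => if A = Finset.univ then (1 : ℝ) / 2 else if A = ∅ then 1 / 2 else 0) ∧
    ∀ i : Fin 2,
      (∑ A : Finset (Fin 2),
          if i ∈ A ∧ i ∈ spanM ({∅, {0}, {1}} : Finset (Finset (Fin 2))) (A.erase i) then
            (if A = Finset.univ then (1 : ℝ) / 2 else if A = ∅ then 1 / 2 else 0)
          else 0) /
        prElem (fun A => if A = Finset.univ then (1 : ℝ) / 2 else if A = ∅ then 1 / 2 else 0)
          i = 1 := by
  constructor
  · -- Uncontentious
    refine ⟨Cex, ⟨?_, ?_, ?_⟩, ?_⟩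
    · intro φ
      unfold Cex
      split_ifs <;> norm_num
    · unfold Cex
      rw [sum_ite_two fsel_ne ((1 : ℝ)/2) (1/2)]
      norm_num
    · intro φ hφ A
      by_cases h0 : φ = fsel 0
      · subst h0
        revert A
        decide
      · by_cases h1 : φ = fsel 1
        · subst h1
          revert A
          decide
        · exfalso
          exact hφ (by simp [Cex, h0, h1])
    · intro i _
      rw [prElem_eval i]
      have hinner : ∀ A : Finset (Fin 2),
          (∑ φ : Finset (Fin 2) → Finset (Fin 2),
            if i ∈ φ A ∧ i ∈ A then
              (if A = Finset.univ then (1 : ℝ) / 2 else if A = ∅ then 1 / 2 else 0) * Cex φ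
            else 0)
          = (if i ∈ fsel 0 A ∧ i ∈ A then
              (if A = Finset.univ then (1 : ℝ) / 2 else if A = ∅ then 1 / 2 else 0) * (1/2)
            else 0)
          + (if i ∈ fsel 1 A ∧ i ∈ A then
              (if A = Finset.univ then (1 : ℝ) / 2 else if A = ∅ then 1 / 2 else 0) * (1/2)
            else 0) := by
        intro A
        have hpt : ∀ φ : Finset (Fin 2) → Finset (Fin 2),
            (if i ∈ φ A ∧ i ∈ A then
              (if A = Finset.univ then (1 : ℝ) / 2 else if A = ∅ then 1 / 2 else 0) * Cex φ
            else 0)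
            = (if φ = fsel 0 then
                (if i ∈ fsel 0 A ∧ i ∈ A then
                  (if A = Finset.univ then (1 : ℝ) / 2 else if A = ∅ then 1 / 2 else 0) * (1/2)
                else 0)
              else if φ = fsel 1 then
                (if i ∈ fsel 1 A ∧ i ∈ A then
                  (if A = Finset.univ then (1 : ℝ) / 2 else if A = ∅ then 1 / 2 else 0) * (1/2)
                else 0)
              else 0) := by
          intro φ
          by_cases h0 : φ = fsel 0
          · subst h0; simp [Cex]
          · by_cases h1 : φ = fsel 1
            · subst h1; simp [Cex, h0, fsel_ne.symm]
            · simp [Cex, h0, h1]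
        rw [Finset.sum_congr rfl (fun φ _ => hpt φ), sum_ite_two fsel_ne]
      unfold selProb
      rw [Finset.sum_congr rfl (fun A _ => hinner A)]
      fin_cases i <;> simp only [Fin.mk_zero, Fin.mk_one]
      · have hpt : ∀ A : Finset (Fin 2),
            ((if (0 : Fin 2) ∈ fsel 0 A ∧ (0 : Fin 2) ∈ A then
              (if A = Finset.univ then (1 : ℝ) / 2 else if A = ∅ then 1 / 2 else 0) * (1/2)
            else 0)
            + (if (0 : Fin 2) ∈ fsel 1 A ∧ (0 : Fin 2) ∈ A then
              (if A = Finset.univ then (1 : ℝ) / 2 else if A = ∅ then 1 / 2 else 0) * (1/2)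
            else 0))
            = (if A = Finset.univ then (1 : ℝ) / 4 else if A = ∅ then 0 else 0) := by
          intro A
          by_cases h1 : A = Finset.univ
          · subst h1
            norm_num [fsel]
          · by_cases h2 : A = ∅
            · subst h2
              simp [fsel, (by decide : (∅ : Finset (Fin 2)) ≠ Finset.univ)]
            · simp [fsel, h1, h2]
        rw [Finset.sum_congr rfl (fun A _ => hpt A), sum_ite_two (by decide) ((1 : ℝ)/4) 0]
        norm_num
      · have hpt : ∀ A : Finset (Fin 2),
            ((if (1 : Fin 2) ∈ fsel 0 A ∧ (1 : Fin 2) ∈ A then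
              (if A = Finset.univ then (1 : ℝ) / 2 else if A = ∅ then 1 / 2 else 0) * (1/2)
            else 0)
            + (if (1 : Fin 2) ∈ fsel 1 A ∧ (1 : Fin 2) ∈ A then
              (if A = Finset.univ then (1 : ℝ) / 2 else if A = ∅ then 1 / 2 else 0) * (1/2)
            else 0))
            = (if A = Finset.univ then (1 : ℝ) / 4 else if A = ∅ then 0 else 0) := by
          intro A
          by_cases h1 : A = Finset.univ
          · subst h1
            norm_num [fsel]
          · by_cases h2 : A = ∅
            · subst h2
              simp [fsel, (by decide : (∅ : Finset (Fin 2)) ≠ Finset.univ)]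
            · simp [fsel, h1, h2]
        rw [Finset.sum_congr rfl (fun A _ => hpt A), sum_ite_two (by decide) ((1 : ℝ)/4) 0]
        norm_num
  · -- span part
    intro i
    rw [prElem_eval i]
    fin_cases i <;> simp only [Fin.mk_zero, Fin.mk_one]
    · have hpt : ∀ A : Finset (Fin 2),
          (if (0 : Fin 2) ∈ A ∧ (0 : Fin 2) ∈ spanM ({∅, {0}, {1}} : Finset (Finset (Fin 2)))
              (A.erase 0) then
            (if A = Finset.univ then (1 : ℝ) / 2 else if A = ∅ then 1 / 2 else 0)
          else 0)
          = (if A = Finset.univ then (1 : ℝ) / 2 else if A = ∅ then 0 else 0) := by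
        intro A
        by_cases h1 : A = Finset.univ
        · subst h1
          rw [if_pos ⟨Finset.mem_univ _, by decide⟩]
          simp
        · by_cases h2 : A = ∅
          · subst h2
            simp [(by decide : (∅ : Finset (Fin 2)) ≠ Finset.univ)]
          · split_ifs <;> simp_all
      rw [Finset.sum_congr rfl (fun A _ => hpt A), sum_ite_two (by decide) ((1 : ℝ)/2) 0]
      norm_num
    · have hpt : ∀ A : Finset (Fin 2),
          (if (1 : Fin 2) ∈ A ∧ (1 : Fin 2) ∈ spanM ({∅, {0}, {1}} : Finset (Finset (Fin 2)))
              (A.erase 1) then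
            (if A = Finset.univ then (1 : ℝ) / 2 else if A = ∅ then 1 / 2 else 0)
          else 0)
          = (if A = Finset.univ then (1 : ℝ) / 2 else if A = ∅ then 0 else 0) := by
        intro A
        by_cases h1 : A = Finset.univ
        · subst h1
          rw [if_pos ⟨Finset.mem_univ _, by decide⟩]
          simp
        · by_cases h2 : A = ∅
          · subst h2
            simp [(by decide : (∅ : Finset (Fin 2)) ≠ Finset.univ)]
          · split_ifs <;> simp_all
      rw [Finset.sum_congr rfl (fun A _ => hpt A), sum_ite_two (by decide) ((1 : ℝ)/2) 0]
      norm_num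
end
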